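/- arXiv:2005.09922 — 5 statements merged into one kernel-verified Lean document; each statement's English description precedes it below -/
import Mathlib

section
/- Let (a_n)_{n≥0} be a strictly positive, decreasing sequence of real numbers with a_0 ≠ 0, such that a_n → 0 (so the power series F(z) = Σ_{n≥0} a_n z^n converges on the closed unit disc). Then F(z) has no zeros in the closed unit disc {z ∈ ℂ : |z| ≤ 1}. -/
open Filter

/-- a power series with strictly decreasing positive real coefficients
tending to `0` has no zeros in the closed unit disc (wherever it converges). -/
theorem stmt1 (a : ℕ → ℝ) (hpos : ∀ n, 0 < a n) (hdec : StrictAnti a)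
    (h0 : a 0 ≠ 0) (hlim : Tendsto a atTop (nhds 0)) :
    ∀ z : ℂ, ‖z‖ ≤ 1 → ∀ S : ℂ, HasSum (fun n : ℕ => (a n : ℂ) * z ^ n) S → S ≠ 0 := by
  intro z hz S hS hS0
  subst hS0
  -- the case z = 1
  by_cases hz1 : z = 1
  · subst hz1
    have hre : HasSum a (0 : ℂ).re := by
      have := Complex.hasSum_re hS
      simpa using this
    have : a 0 ≤ (0 : ℂ).re := le_hasSum hre 0 (fun i _ => (hpos i).le)
    simp at this
    exact absurd (le_antisymm this (hpos 0).le) h0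
  -- differences
  set b : ℕ → ℝ := fun n => a n - a (n + 1) with hbdef
  have hbpos : ∀ n, 0 < b n := fun n => sub_pos.2 (hdec (Nat.lt_succ_self n))
  have hbsum : HasSum b (a 0) := by
    rw [hasSum_iff_tendsto_nat_of_nonneg (fun n => (hbpos n).le)]
    have heq : ∀ n, ∑ i ∈ Finset.range n, b i = a 0 - a n := fun n =>
      Finset.sum_range_sub' a n
    simp_rw [heq]
    simpa using (tendsto_const_nhds (x := a 0)).sub hlim
  -- shifted sum
  have hshift : HasSum (fun n => (a (n + 1) : ℂ) * z ^ (n + 1))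
      ((0 : ℂ) - ∑ i ∈ Finset.range 1, (a i : ℂ) * z ^ i) :=
    (hasSum_nat_add_iff' 1).2 hS
  have hc : HasSum (fun n => (b n : ℂ) * z ^ (n + 1)) ((a 0 : ℂ)) := by
    have h1 := (hS.mul_left z).sub hshift
    have h2 : (fun n => z * ((a n : ℂ) * z ^ n) - (a (n + 1) : ℂ) * z ^ (n + 1))
        = fun n => (b n : ℂ) * z ^ (n + 1) := by
      funext n
      push_cast [hbdef]
      ring
    rw [h2] at h1
    simpa using h1
  have hz0 : z ≠ 0 := by
    rintro rfl
    have h00 : HasSum (fun n : ℕ => (b n : ℂ) * (0 : ℂ) ^ (n + 1)) 0 := by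
      convert hasSum_zero with n
      simp
    have := hc.unique h00
    exact h0 (by exact_mod_cast this)
  have hnorm : ∀ n, ‖(b n : ℂ) * z ^ (n + 1)‖ = b n * ‖z‖ ^ (n + 1) := by
    intro n
    rw [norm_mul, norm_pow, Complex.norm_real, Real.norm_eq_abs,
      abs_of_pos (hbpos n)]
  have hnle : ∀ n, ‖(b n : ℂ) * z ^ (n + 1)‖ ≤ b n := by
    intro n
    rw [hnorm n]
    calc b n * ‖z‖ ^ (n + 1) ≤ b n * 1 := by
          apply mul_le_mul_of_nonneg_left _ (hbpos n).le
          exact pow_le_one₀ (norm_nonneg z) hz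
      _ = b n := mul_one _
  have hsumnorm : Summable (fun n => ‖(b n : ℂ) * z ^ (n + 1)‖) :=
    Summable.of_nonneg_of_le (fun n => norm_nonneg _) hnle hbsum.summable
  have hkey : a 0 = ‖∑' n, (b n : ℂ) * z ^ (n + 1)‖ := by
    rw [hc.tsum_eq, Complex.norm_real, Real.norm_eq_abs, abs_of_pos (hpos 0)]
  rcases lt_or_eq_of_le hz with hlt | heq1
  · -- |z| < 1 : strict inequality termwise
    have h1 : ‖∑' n, (b n : ℂ) * z ^ (n + 1)‖ ≤ ∑' n, ‖(b n : ℂ) * z ^ (n + 1)‖ :=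
      norm_tsum_le_tsum_norm hsumnorm
    have h2 : ∑' n, ‖(b n : ℂ) * z ^ (n + 1)‖ < ∑' n, b n := by
      apply Summable.tsum_lt_tsum_of_nonneg (i := 0) (fun n => norm_nonneg _) hnle _ hbsum.summable
      rw [hnorm 0]
      calc b 0 * ‖z‖ ^ (0 + 1) < b 0 * 1 := by
            apply mul_lt_mul_of_pos_left _ (hbpos 0)
            simpa using hlt
        _ = b 0 := mul_one _
    rw [hbsum.tsum_eq] at h2
    exact absurd (hkey ▸ h1.trans_lt h2) (lt_irrefl _)
  · -- |z| = 1, z ≠ 1 : strict triangle inequality for first two terms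
    set c : ℕ → ℂ := fun n => (b n : ℂ) * z ^ (n + 1) with hcdef
    have hcnorm : ∀ n, ‖c n‖ = b n := by
      intro n
      rw [hnorm n, heq1, one_pow, mul_one]
    have htail : HasSum (fun n => c (n + 2)) ((a 0 : ℂ) - ∑ i ∈ Finset.range 2, c i) :=
      (hasSum_nat_add_iff' 2).2 hc
    have htailr : HasSum (fun n => b (n + 2)) (a 0 - ∑ i ∈ Finset.range 2, b i) :=
      (hasSum_nat_add_iff' 2).2 hbsum
    have hnsr : ¬ SameRay ℝ (c 0) (c 1) := by
      intro hsr
      have hc0 : c 0 ≠ 0 := by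
        simp [hcdef]
        push_neg
        exact ⟨(hbpos 0).ne', hz0⟩
      have hc1 : c 1 ≠ 0 := by
        simp [hcdef]
        push_neg
        exact ⟨(hbpos 1).ne', hz0⟩
      obtain ⟨r, hr, hrc⟩ := hsr.exists_pos_left hc0 hc1
      -- r • (b 0 * z) = b 1 * z^2  ⇒  z = r * b 0 / b 1 real positive
      have hzr : z = ((r * b 0 / b 1 : ℝ) : ℂ) := by
        have hb1 : (b 1 : ℂ) ≠ 0 := by
          exact_mod_cast (hbpos 1).ne'
        have h1 : (r : ℂ) * (b 0 : ℂ) * z = ((b 1 : ℂ) * z) * z := by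
          have h := hrc
          simp only [hcdef, Complex.real_smul] at h
          push_cast at h ⊢
          linear_combination h
        have h2 := mul_right_cancel₀ hz0 h1
        push_cast
        field_simp
        linear_combination -h2
      have hpos' : 0 < r * b 0 / b 1 := div_pos (mul_pos hr (hbpos 0)) (hbpos 1)
      have heqr : (r * b 0 / b 1 : ℝ) = 1 := by
        have h := heq1
        rw [hzr, Complex.norm_real, Real.norm_eq_abs, abs_of_pos hpos'] at h
        exact h
      rw [heqr] at hzr
      exact hz1 (by simpa using hzr)
    have hstrict : ‖c 0 + c 1‖ < b 0 + b 1 := by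
      calc ‖c 0 + c 1‖ < ‖c 0‖ + ‖c 1‖ := norm_add_lt_of_not_sameRay hnsr
        _ = b 0 + b 1 := by rw [hcnorm 0, hcnorm 1]
    -- assemble
    have hsum2 : ∑ i ∈ Finset.range 2, c i = c 0 + c 1 := by
      simp [Finset.sum_range_succ]
    have hsum2b : ∑ i ∈ Finset.range 2, b i = b 0 + b 1 := by
      simp [Finset.sum_range_succ]
    have htnorm : ‖(a 0 : ℂ) - (c 0 + c 1)‖ ≤ a 0 - (b 0 + b 1) := by
      rw [← hsum2, ← htail.tsum_eq, ← hsum2b, ← htailr.tsum_eq]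
      calc ‖∑' n, c (n + 2)‖ ≤ ∑' n, ‖c (n + 2)‖ := by
            apply norm_tsum_le_tsum_norm
            exact (summable_nat_add_iff 2).2 hsumnorm
        _ = ∑' n, b (n + 2) := by
            apply tsum_congr
            intro n
            exact hcnorm (n + 2)
    have : (a 0 : ℝ) = ‖(a 0 : ℂ)‖ := by
      rw [Complex.norm_real, Real.norm_eq_abs, abs_of_pos (hpos 0)]
    have hfinal : (a 0 : ℝ) < a 0 := by
      calc (a 0 : ℝ) = ‖(a 0 : ℂ)‖ := this
        _ = ‖(c 0 + c 1) + ((a 0 : ℂ) - (c 0 + c 1))‖ := by ring_nf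
        _ ≤ ‖c 0 + c 1‖ + ‖(a 0 : ℂ) - (c 0 + c 1)‖ := norm_add_le _ _
        _ < (b 0 + b 1) + (a 0 - (b 0 + b 1)) := by
            apply add_lt_add_of_lt_of_le hstrict htnorm
        _ = a 0 := by ring
    exact absurd hfinal (lt_irrefl _)
end

section
/- For any p ∈ (0,1), the entire function B_p(x) = Σ_{n≥0} (1-p)^{C(n+1,2)} x^n has no zeros in the closed unit disc, and hence there exists a real r > 1 such that B_p has no zeros in the closed disc |x| ≤ r. -/
/-- The entire function `B_p(z) = Σ_{n≥0} (1-p)^{C(n+1,2)} z^n` on `ℂ`. -/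
noncomputable def Bc (p : ℝ) (z : ℂ) : ℂ :=
  ∑' n : ℕ, ((1 : ℂ) - (p : ℂ)) ^ ((n + 1).choose 2) * z ^ n

section aux

lemma choose_succ_two (n : ℕ) : (n+1).choose 2 = n.choose 2 + n := by
  rw [Nat.choose_succ_succ]; simp [Nat.choose_one_right, Nat.add_comm]

/-- telescoping sum of `b n = q ^ (n.choose 2)` -/
lemma telescope_hasSum {q : ℝ} (hq0 : 0 < q) (hq1 : q < 1) : HasSum (fun n : ℕ => q ^ (n.choose 2) - q ^ ((n+1).choose 2)) 1 := by
  have hnonneg : ∀ n : ℕ, 0 ≤ q ^ (n.choose 2) - q ^ ((n+1).choose 2) := by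
    intro n
    have : q ^ ((n+1).choose 2) ≤ q ^ (n.choose 2) :=
      pow_le_pow_of_le_one hq0.le hq1.le (Nat.choose_le_choose 2 (Nat.le_succ n))
    linarith
  rw [hasSum_iff_tendsto_nat_of_nonneg hnonneg]
  have hsum : ∀ N : ℕ, ∑ n ∈ Finset.range N, (q ^ (n.choose 2) - q ^ ((n+1).choose 2))
      = 1 - q ^ (N.choose 2) := by
    intro N
    rw [Finset.sum_range_sub' (fun n => q ^ (n.choose 2))]
    simp
  simp only [hsum]
  have hb : Filter.Tendsto (fun N : ℕ => q ^ (N.choose 2)) Filter.atTop (nhds 0) := by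
    rw [← Filter.tendsto_add_atTop_iff_nat 1]
    apply squeeze_zero (fun n => by positivity) (g := fun n : ℕ => q ^ n)
    · intro n
      exact pow_le_pow_of_le_one hq0.le hq1.le
        (by rw [choose_succ_two]; exact Nat.le_add_left n _)
    · exact tendsto_pow_atTop_nhds_zero_of_lt_one hq0.le hq1
  have := hb.const_sub 1
  simpa using this

lemma main_aux {q : ℝ} (hq0 : 0 < q) (hq1 : q < 1) (r : ℝ) (hr1 : 1 ≤ r) (hrq : r < q⁻¹) (z : ℂ) (hz : ‖z‖ ≤ r) :
    (∑' n : ℕ, ((q : ℂ)) ^ ((n + 1).choose 2) * z ^ n) ≠ 0 := by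
  set c : ℝ := q * r with hc
  have hc0 : 0 ≤ c := by positivity
  have hc1 : c < 1 := by
    have := (mul_lt_mul_iff_right₀ hq0).2 hrq
    rwa [mul_inv_cancel₀ hq0.ne'] at this
  set a : ℕ → ℂ := fun n => (q : ℂ) ^ ((n + 1).choose 2) with ha
  -- summability of the main series
  have hzn : ∀ n : ℕ, ‖a n * z ^ n‖ ≤ c ^ n := by
    intro n
    rw [norm_mul, norm_pow, norm_pow, Complex.norm_real, Real.norm_eq_abs,
      abs_of_pos hq0, mul_pow]
    have h1 : q ^ ((n+1).choose 2) ≤ q ^ n :=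
      pow_le_pow_of_le_one hq0.le hq1.le
        (by rw [choose_succ_two]; exact Nat.le_add_left n _)
    have h2 : ‖z‖ ^ n ≤ r ^ n := pow_le_pow_left₀ (norm_nonneg z) hz n
    have hzr0 : (0:ℝ) ≤ ‖z‖ ^ n := by positivity
    calc q ^ ((n+1).choose 2) * ‖z‖ ^ n ≤ q ^ n * r ^ n := by
          apply mul_le_mul h1 h2 hzr0 (by positivity)
      _ = q ^ n * r ^ n := rfl
  have hsummain : Summable (fun n : ℕ => a n * z ^ n) :=
    Summable.of_norm_bounded (summable_geometric_of_lt_one hc0 hc1) hzn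
  set B : ℂ := ∑' n : ℕ, a n * z ^ n with hB
  have hBsum : HasSum (fun n : ℕ => a n * z ^ n) B := hsummain.hasSum
  -- shifted series
  have hshift : HasSum (fun n : ℕ => a (n+1) * z ^ (n+1)) (B - 1) := by
    apply (hasSum_nat_add_iff (f := fun n : ℕ => a n * z ^ n) 1).2
    have ha0 : ∑ i ∈ Finset.range 1, a i * z ^ i = 1 := by
      norm_num [ha, Nat.choose]
    rw [ha0]
    simpa using hBsum
  have hmul : HasSum (fun n : ℕ => (q:ℂ) * z * (a n * z ^ n)) ((q:ℂ) * z * B) :=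
    hBsum.mul_left _
  have hT : HasSum (fun n : ℕ => ((q:ℂ) * a n - a (n+1)) * z ^ (n+1))
      ((q:ℂ) * z * B - (B - 1)) := by
    have := hmul.sub hshift
    convert this using 3 with n
    · rfl
    ring
  -- norm bound on the terms of hT
  have hterm : ∀ n : ℕ, ‖((q:ℂ) * a n - a (n+1)) * z ^ (n+1)‖
      ≤ (q ^ (n.choose 2) - q ^ ((n+1).choose 2)) * c := by
    intro n
    have hreal : (q:ℂ) * a n - a (n+1)
        = (((q ^ (n.choose 2) - q ^ ((n+1).choose 2)) * q ^ (n+1) : ℝ) : ℂ) := by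
      simp only [ha]
      push_cast
      rw [choose_succ_two (n+1), choose_succ_two n]
      ring
    rw [hreal, norm_mul, norm_pow, Complex.norm_real, Real.norm_eq_abs]
    have hbdiff : 0 ≤ q ^ (n.choose 2) - q ^ ((n+1).choose 2) := by
      have : q ^ ((n+1).choose 2) ≤ q ^ (n.choose 2) :=
        pow_le_pow_of_le_one hq0.le hq1.le (Nat.choose_le_choose 2 (Nat.le_succ n))
      linarith
    rw [abs_of_nonneg (by positivity)]
    have h2 : ‖z‖ ^ (n+1) ≤ r ^ (n+1) := pow_le_pow_left₀ (norm_nonneg z) hz _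
    calc (q ^ (n.choose 2) - q ^ ((n+1).choose 2)) * q ^ (n+1) * ‖z‖ ^ (n+1)
        ≤ (q ^ (n.choose 2) - q ^ ((n+1).choose 2)) * q ^ (n+1) * r ^ (n+1) := by
          apply mul_le_mul_of_nonneg_left h2 (by positivity)
      _ = (q ^ (n.choose 2) - q ^ ((n+1).choose 2)) * c ^ (n+1) := by
          rw [hc, mul_pow]; ring
      _ ≤ (q ^ (n.choose 2) - q ^ ((n+1).choose 2)) * c := by
          apply mul_le_mul_of_nonneg_left _ hbdiff
          calc c ^ (n+1) ≤ c ^ 1 :=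
                pow_le_pow_of_le_one hc0 hc1.le (by omega)
            _ = c := pow_one c
  have hsumbound : Summable (fun n : ℕ => (q ^ (n.choose 2) - q ^ ((n+1).choose 2)) * c) :=
    ((telescope_hasSum hq0 hq1).summable).mul_right c
  have hsumnorm : Summable (fun n : ℕ => ‖((q:ℂ) * a n - a (n+1)) * z ^ (n+1)‖) :=
    Summable.of_nonneg_of_le (fun n => norm_nonneg _) hterm hsumbound
  -- conclude
  intro hB0
  have hTval : (q:ℂ) * z * B - (B - 1) = 1 := by rw [hB0]; ring
  rw [hTval] at hT
  have hnorm : (1:ℝ) ≤ c := by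
    have h1 : ‖(1:ℂ)‖ ≤ ∑' n : ℕ, ‖((q:ℂ) * a n - a (n+1)) * z ^ (n+1)‖ := by
      rw [← hT.tsum_eq]
      exact norm_tsum_le_tsum_norm hsumnorm
    have h2 : (∑' n : ℕ, ‖((q:ℂ) * a n - a (n+1)) * z ^ (n+1)‖)
        ≤ ∑' n : ℕ, (q ^ (n.choose 2) - q ^ ((n+1).choose 2)) * c :=
      Summable.tsum_le_tsum hterm hsumnorm hsumbound
    have h3 : (∑' n : ℕ, (q ^ (n.choose 2) - q ^ ((n+1).choose 2)) * c) = c := by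
      rw [tsum_mul_right, (telescope_hasSum hq0 hq1).tsum_eq, one_mul]
    simp only [norm_one] at h1
    linarith
  linarith

end aux

/-- for `p ∈ (0,1)`, `B_p` has no zeros in the closed unit disc,
and hence no zeros in some closed disc of radius `r > 1`. -/
theorem stmt2 (p : ℝ) (hp : p ∈ Set.Ioo (0 : ℝ) 1) :
    (∀ z : ℂ, ‖z‖ ≤ 1 → Bc p z ≠ 0) ∧
      ∃ r : ℝ, 1 < r ∧ ∀ z : ℂ, ‖z‖ ≤ r → Bc p z ≠ 0 := by
  obtain ⟨hp0, hp1⟩ := hp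
  set q : ℝ := 1 - p with hqdef
  have hq0 : 0 < q := by simp [hqdef]; linarith
  have hq1 : q < 1 := by simp [hqdef]; linarith
  have hqinv : 1 < q⁻¹ := (one_lt_inv₀ hq0).2 hq1
  have hcast : ((1 : ℂ) - (p : ℂ)) = ((q : ℝ) : ℂ) := by
    rw [hqdef]; push_cast; ring
  have hBc : ∀ z : ℂ, Bc p z = ∑' n : ℕ, ((q : ℂ)) ^ ((n + 1).choose 2) * z ^ n := by
    intro z; rw [Bc]; simp_rw [hcast]
  set r : ℝ := (1 + q⁻¹) / 2 with hr
  have hr1 : 1 < r := by rw [hr]; linarith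
  have hrq : r < q⁻¹ := by rw [hr]; linarith
  constructor
  · intro z hz
    rw [hBc]
    exact main_aux hq0 hq1 r hr1.le hrq z (hz.trans hr1.le)
  · exact ⟨r, hr1, fun z hz => by rw [hBc]; exact main_aux hq0 hq1 r hr1.le hrq z hz⟩
end

section
/- Consider the transitive tournament on vertices {1,...,n} with i.i.d. Bernoulli(p) edge weights, p ∈ (0,1), and let X_n be the maximum total weight of a directed path from 1 to n. Then f(n) := E[X_n] satisfies the recurrence f(n) = Σ_{i=2}^{n} (1 - (1-p)^{i-1})(1-p)^{C(i-1,2)} (f(n-i+1) + 1), with f(0) = f(1) = 0. -/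
open Finset Filter

noncomputable section

/-- The weight of a path, given as a list of vertices. -/
def pathWeight (wt : ℕ → ℕ → ℕ) (l : List ℕ) : ℕ :=
  ((l.zip l.tail).map fun e => wt e.1 e.2).sum

/-- `l` is a directed path from `a` to `b` in the transitive tournament on `ℕ`. -/
def IsPath (a b : ℕ) (l : List ℕ) : Prop :=
  l.Chain' (· < ·) ∧ l.head? = some a ∧ l.getLast? = some b

/-- `maxW wt a b` is the maximum weight of a directed path from `a` to `b`. -/
def maxW (wt : ℕ → ℕ → ℕ) (a b : ℕ) : ℕ :=
  sSup {m | ∃ l, IsPath a b l ∧ pathWeight wt l = m}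

/-- The edges of the transitive tournament on `n` vertices. -/
abbrev Edge (n : ℕ) := {e : Fin n × Fin n // (e.1 : ℕ) < (e.2 : ℕ)}

/-- The sample space: an assignment of a `0/1` weight (a `Bool`) to each edge. -/
abbrev Omega (n : ℕ) := Edge n → Bool

/-- The weight function on vertices `1, …, n` induced by an outcome `w`. -/
def wtOf {n : ℕ} (w : Omega n) (a b : ℕ) : ℕ :=
  if h : 1 ≤ a ∧ a < b ∧ b ≤ n then
    (if w ⟨(⟨a - 1, by omega⟩, ⟨b - 1, by omega⟩), by show a - 1 < b - 1; omega⟩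
      then 1 else 0)
  else 0

/-- The probability of outcome `w`: each edge independently has weight 1
with probability `p` and weight 0 with probability `1 - p`. -/
def prob (p : ℝ) {n : ℕ} (w : Omega n) : ℝ :=
  ∏ e : Edge n, (if w e then p else 1 - p)

/-- `X n w` : the maximum weight of a directed path from vertex `1` to vertex `n`. -/
def X (n : ℕ) (w : Omega n) : ℕ := maxW (wtOf w) 1 n

/-- The expectation of `X n` under i.i.d. Bernoulli(p) edge weights. -/
def EX (p : ℝ) (n : ℕ) : ℝ := ∑ w : Omega n, prob p w * (X n w : ℝ)


-- basic list lemmas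

lemma pathWeight_nil (wt) : pathWeight wt [] = 0 := rfl
lemma pathWeight_single (wt a) : pathWeight wt [a] = 0 := rfl

lemma pathWeight_cons_cons (wt : ℕ → ℕ → ℕ) (a b : ℕ) (l : List ℕ) :
    pathWeight wt (a :: b :: l) = wt a b + pathWeight wt (b :: l) := rfl

lemma head_le_of_chain' : ∀ {l : List ℕ}, l.Chain' (· < ·) → ∀ {a : ℕ}, l.head? = some a →
    ∀ x ∈ l, a ≤ x := by
  intro l
  induction l with
  | nil => intro _ a h; simp at h
  | cons c t ih =>
    intro hc a ha x hx
    obtain rfl : a = c := ((by simpa using ha : c = a)).symm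
    rcases List.mem_cons.mp hx with rfl | hx
    · omega
    · cases t with
      | nil => simp at hx
      | cons d t' =>
        have h1 : a < d := (List.isChain_cons_cons.mp hc).1
        have h2 := ih (List.isChain_cons_cons.mp hc).2 (a := d) (by simp) x hx
        omega

lemma le_getLast_of_chain' : ∀ {l : List ℕ}, l.Chain' (· < ·) → ∀ {b : ℕ}, l.getLast? = some b →
    ∀ x ∈ l, x ≤ b := by
  intro l
  induction l with
  | nil => intro _ b h; simp at h
  | cons c t ih =>
    intro hc b hb x hx
    cases t with
    | nil =>
      simp at hb hx; omega
    | cons d t' =>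
      have hb' : (d :: t').getLast? = some b := by
        rw [List.getLast?_cons_cons] at hb; exact hb
      have h1 : c < d := (List.isChain_cons_cons.mp hc).1
      have htail := ih (List.isChain_cons_cons.mp hc).2 hb'
      rcases List.mem_cons.mp hx with rfl | hx
      · have := htail d (by simp); omega
      · exact htail x hx

lemma head_le_getLast {l : List ℕ} (hc : l.Chain' (· < ·)) {a b : ℕ}
    (ha : l.head? = some a) (hb : l.getLast? = some b) : a ≤ b := by
  cases l with
  | nil => simp at ha
  | cons c t =>
    obtain rfl : a = c := ((by simpa using ha : c = a)).symm
    exact le_getLast_of_chain' hc hb a (by simp)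

lemma pathWeight_le_sub {wt : ℕ → ℕ → ℕ} (hwt : ∀ x y, wt x y ≤ 1) :
    ∀ {l : List ℕ}, l.Chain' (· < ·) → ∀ {a b : ℕ}, l.head? = some a → l.getLast? = some b →
    pathWeight wt l ≤ b - a := by
  intro l
  induction l with
  | nil => intro _ a b h; simp at h
  | cons c t ih =>
    intro hc a b ha hb
    cases t with
    | nil =>
      obtain rfl : a = c := ((by simpa using ha : c = a)).symm
      obtain rfl : b = a := ((by simpa using hb : a = b)).symm
      simp [pathWeight_single]
    | cons d t' =>
      obtain rfl : a = c := ((by simpa using ha : c = a)).symm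
      have hb' : (d :: t').getLast? = some b := by
        rw [List.getLast?_cons_cons] at hb; exact hb
      have h1 : a < d := (List.isChain_cons_cons.mp hc).1
      have h2 := ih (List.isChain_cons_cons.mp hc).2 (a := d) (by simp) hb'
      have h3 : d ≤ b := head_le_getLast (List.isChain_cons_cons.mp hc).2 (a := d) (by simp) hb'
      rw [pathWeight_cons_cons]
      have := hwt a d
      omega

def achievable (wt : ℕ → ℕ → ℕ) (a b : ℕ) : Set ℕ :=
  {m | ∃ l, IsPath a b l ∧ pathWeight wt l = m}

lemma maxW_eq_sSup (wt a b) : maxW wt a b = sSup (achievable wt a b) := rfl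

lemma achievable_bddAbove {wt : ℕ → ℕ → ℕ} (hwt : ∀ x y, wt x y ≤ 1) (a b : ℕ) :
    BddAbove (achievable wt a b) := by
  refine ⟨b, ?_⟩
  rintro m ⟨l, ⟨hc, ha, hb⟩, rfl⟩
  have := pathWeight_le_sub hwt hc ha hb
  omega

lemma achievable_nonempty {wt : ℕ → ℕ → ℕ} {a b : ℕ} (h : a ≤ b) :
    (achievable wt a b).Nonempty := by
  rcases eq_or_lt_of_le h with rfl | h
  · exact ⟨pathWeight wt [a], [a], ⟨List.isChain_singleton a, by simp, by simp⟩, rfl⟩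
  · exact ⟨pathWeight wt [a, b], [a, b], ⟨List.isChain_cons_cons.mpr ⟨h, List.isChain_singleton b⟩, by simp, by simp⟩, rfl⟩

lemma le_maxW {wt : ℕ → ℕ → ℕ} (hwt : ∀ x y, wt x y ≤ 1) {a b m : ℕ}
    (hm : m ∈ achievable wt a b) : m ≤ maxW wt a b :=
  le_csSup (achievable_bddAbove hwt a b) hm

lemma maxW_le {wt : ℕ → ℕ → ℕ} {a b K : ℕ} (hne : (achievable wt a b).Nonempty)
    (h : ∀ m ∈ achievable wt a b, m ≤ K) : maxW wt a b ≤ K :=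
  csSup_le hne h

lemma maxW_mem {wt : ℕ → ℕ → ℕ} (hwt : ∀ x y, wt x y ≤ 1) {a b : ℕ}
    (hne : (achievable wt a b).Nonempty) : maxW wt a b ∈ achievable wt a b :=
  Nat.sSup_mem hne (achievable_bddAbove hwt a b)

-- monotonicity
lemma maxW_mono {wt : ℕ → ℕ → ℕ} (hwt : ∀ x y, wt x y ≤ 1) {i k n : ℕ}
    (hik : i ≤ k) (hkn : k ≤ n) : maxW wt k n ≤ maxW wt i n := by
  rcases eq_or_lt_of_le hik with rfl | hik
  · exact le_rfl
  have hne : (achievable wt k n).Nonempty := achievable_nonempty hkn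
  obtain ⟨l, ⟨hc, hh, hl⟩, hpw⟩ := maxW_mem hwt hne
  cases l with
  | nil => simp at hh
  | cons c t =>
    obtain rfl : k = c := ((by simpa using hh : c = k)).symm
    refine le_trans ?_ (le_maxW hwt (a := i) (b := n)
      (m := pathWeight wt (i :: k :: t)) ⟨i :: k :: t, ⟨?_, by simp, ?_⟩, rfl⟩)
    · rw [← hpw, pathWeight_cons_cons]; omega
    · exact List.isChain_cons_cons.mpr ⟨hik, hc⟩
    · rw [List.getLast?_cons_cons]; exact hl

-- zero weight
lemma pathWeight_zero {wt : ℕ → ℕ → ℕ} (hwt : ∀ x y, wt x y = 0) (l : List ℕ) :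
    pathWeight wt l = 0 := by
  simp [pathWeight, hwt]

lemma maxW_zero {wt : ℕ → ℕ → ℕ} (hwt : ∀ x y, wt x y = 0) {a b : ℕ} (h : a ≤ b) :
    maxW wt a b = 0 := by
  refine Nat.le_antisymm (maxW_le (achievable_nonempty h) ?_) (by omega)
  rintro m ⟨l, _, rfl⟩
  simp [pathWeight_zero hwt]

lemma maxW_empty {wt : ℕ → ℕ → ℕ} {a b : ℕ} (h : ¬ a ≤ b) : maxW wt a b = 0 := by
  have : achievable wt a b = ∅ := by
    ext m; simp only [achievable, Set.mem_setOf_eq, Set.mem_empty_iff_false, iff_false]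
    rintro ⟨l, ⟨hc, ha, hb⟩, rfl⟩
    exact h (head_le_getLast hc ha hb)
  rw [maxW_eq_sSup, this]
  exact csSup_empty

-- the key step lemma
lemma maxW_step {wt : ℕ → ℕ → ℕ} (hwt : ∀ x y, wt x y ≤ 1) {i n : ℕ}
    (h2 : 2 ≤ i) (hin : i ≤ n)
    (h0 : ∀ a b, b < i → wt a b = 0)
    (h1 : ∃ j, 1 ≤ j ∧ j < i ∧ wt j i = 1) :
    maxW wt 1 n = maxW wt i n + 1 := by
  set M := maxW wt i n with hM
  -- upper bound for paths starting below i
  have upper : ∀ l : List ℕ, l.Chain' (· < ·) → l.getLast? = some n →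
      ∀ a, l.head? = some a → a < i → pathWeight wt l ≤ M + 1 := by
    intro l
    induction l with
    | nil => intro _ h; simp at h
    | cons c t ih =>
      intro hc hlast a ha hai
      obtain rfl : a = c := ((by simpa using ha : c = a)).symm
      cases t with
      | nil =>
        obtain rfl : n = a := ((by simpa using hlast : a = n)).symm
        omega
      | cons d t' =>
        have hlast' : (d :: t').getLast? = some n := by
          rw [List.getLast?_cons_cons] at hlast; exact hlast
        have hcd : a < d := (List.isChain_cons_cons.mp hc).1
        have hct : (d :: t').Chain' (· < ·) := (List.isChain_cons_cons.mp hc).2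
        rw [pathWeight_cons_cons]
        by_cases hd : d < i
        · have := ih hct hlast' d (by simp) hd
          rw [h0 a d hd]; omega
        · push_neg at hd
          have hmem : pathWeight wt (d :: t') ∈ achievable wt d n :=
            ⟨d :: t', ⟨hct, by simp, hlast'⟩, rfl⟩
          have h1' := le_maxW hwt hmem
          have h2' := maxW_mono hwt hd (head_le_getLast hct (a := d) (by simp) hlast')
          have := hwt a d
          omega
  -- lower bound
  obtain ⟨j, hj1, hji, hjw⟩ := h1
  obtain ⟨l, ⟨hc, hh, hl⟩, hpw⟩ := maxW_mem hwt (achievable_nonempty hin (wt := wt))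
  cases l with
  | nil => simp at hh
  | cons c t =>
    obtain rfl : i = c := ((by simpa using hh : c = i)).symm
    have hge : M + 1 ≤ maxW wt 1 n := by
      rcases eq_or_lt_of_le hj1 with rfl | hj1'
      · -- j = 1 : path 1 :: i :: t
        refine le_trans ?_ (le_maxW hwt (a := 1) (b := n)
          (m := pathWeight wt (1 :: i :: t)) ⟨1 :: i :: t, ⟨?_, by simp, ?_⟩, rfl⟩)
        · rw [pathWeight_cons_cons, hjw, hM, ← hpw]; omega
        · exact List.isChain_cons_cons.mpr ⟨by omega, hc⟩
        · rw [List.getLast?_cons_cons]; exact hl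
      · -- 1 < j : path 1 :: j :: i :: t
        refine le_trans ?_ (le_maxW hwt (a := 1) (b := n)
          (m := pathWeight wt (1 :: j :: i :: t)) ⟨1 :: j :: i :: t, ⟨?_, by simp, ?_⟩, rfl⟩)
        · rw [pathWeight_cons_cons, pathWeight_cons_cons, hjw, h0 1 j hji, hM, ← hpw]; omega
        · exact List.isChain_cons_cons.mpr ⟨by omega, List.isChain_cons_cons.mpr ⟨hji, hc⟩⟩
        · rw [List.getLast?_cons_cons, List.getLast?_cons_cons]; exact hl
    have hle : maxW wt 1 n ≤ M + 1 := by
      refine maxW_le (achievable_nonempty (by omega)) ?_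
      rintro m ⟨l', ⟨hc', ha', hb'⟩, rfl⟩
      exact upper l' hc' hb' 1 ha' (by omega)
    omega

-- pathWeight congruence
lemma pathWeight_congr {wt wt' : ℕ → ℕ → ℕ} {h t : ℕ}
    (H : ∀ a b, h ≤ a → a < b → b ≤ t → wt a b = wt' a b) :
    ∀ {l : List ℕ}, l.Chain' (· < ·) → ∀ {h' : ℕ}, l.head? = some h' → h ≤ h' →
      l.getLast? = some t → pathWeight wt l = pathWeight wt' l := by
  intro l
  induction l with
  | nil => intro _ h' hh; simp at hh
  | cons c s ih =>
    intro hc h' hh hhh hlast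
    obtain rfl : h' = c := ((by simpa using hh : c = h')).symm
    cases s with
    | nil => simp [pathWeight_single]
    | cons d s' =>
      have hlast' : (d :: s').getLast? = some t := by
        rw [List.getLast?_cons_cons] at hlast; exact hlast
      have hcd : h' < d := (List.isChain_cons_cons.mp hc).1
      have hct : (d :: s').Chain' (· < ·) := (List.isChain_cons_cons.mp hc).2
      have hdt : d ≤ t := head_le_getLast hct (a := d) (by simp) hlast'
      rw [pathWeight_cons_cons, pathWeight_cons_cons,
        H h' d (by omega) hcd hdt, ih hct (h' := d) (by simp) (by omega) hlast']

lemma pathWeight_map_add (wt : ℕ → ℕ → ℕ) (k : ℕ) :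
    ∀ l : List ℕ, pathWeight wt (l.map (· + k)) = pathWeight (fun a b => wt (a + k) (b + k)) l := by
  intro l
  induction l with
  | nil => rfl
  | cons c s ih =>
    cases s with
    | nil => rfl
    | cons d s' =>
      simp only [List.map_cons] at ih ⊢
      rw [pathWeight_cons_cons, pathWeight_cons_cons, ih]

lemma maxW_shift {wt wt' : ℕ → ℕ → ℕ} {k m : ℕ}
    (h : ∀ a b, 1 ≤ a → a < b → b ≤ m → wt' a b = wt (a + k) (b + k)) :
    maxW wt' 1 m = maxW wt (1 + k) (m + k) := by
  rw [maxW_eq_sSup, maxW_eq_sSup]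
  congr 1
  ext x
  constructor
  · rintro ⟨l, ⟨hc, hh, hl⟩, rfl⟩
    refine ⟨l.map (· + k), ⟨?_, ?_, ?_⟩, ?_⟩
    · exact (List.isChain_map _).mpr (hc.imp (fun a b hab => by omega))
    · rw [List.head?_map, hh]; rfl
    · rw [List.getLast?_map, hl]; rfl
    · rw [pathWeight_map_add]
      exact (pathWeight_congr (fun a b ha hab hb => h a b ha hab hb) hc (h' := 1) hh le_rfl hl).symm
  · rintro ⟨l, ⟨hc, hh, hl⟩, rfl⟩
    have hmem : ∀ x ∈ l, 1 + k ≤ x := head_le_of_chain' hc hh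
    have hmap : (l.map (fun x => x - k)).map (· + k) = l := by
      rw [List.map_map]
      have : ∀ x ∈ l, ((· + k) ∘ fun x => x - k) x = id x := by
        intro x hx; have := hmem x hx; simp; omega
      rw [List.map_congr_left this, List.map_id]
    refine ⟨l.map (fun x => x - k), ⟨?_, ?_, ?_⟩, ?_⟩
    · refine (List.isChain_map _).mpr ?_
      have : ∀ {l' : List ℕ}, l'.Chain' (· < ·) → (∀ x ∈ l', k ≤ x) →
          l'.Chain' (fun a b => a - k < b - k) := by
        intro l'
        induction l' with
        | nil => intro _ _; exact List.IsChain.nil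
        | cons c s ih =>
          intro hc' hm
          cases s with
          | nil => exact List.isChain_singleton c
          | cons d s' =>
            simp only [List.Chain', List.isChain_cons_cons] at hc' ⊢
            refine ⟨?_, ih hc'.2 (fun x hx => hm x (by simp [hx]))⟩
            have := hm c (by simp); have := hm d (by simp)
            omega
      exact this hc (fun x hx => by have := hmem x hx; omega)
    · rw [List.head?_map, hh]; simp
    · rw [List.getLast?_map, hl]; simp
    · have hch : (l.map (fun x => x - k)).Chain' (· < ·) := by
        refine (List.isChain_map _).mpr ?_
        exact List.Pairwise.isChain ((List.isChain_iff_pairwise.mp hc).imp_of_mem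
          (fun {a b} ha hb hab => by have := hmem a ha; omega))
      calc pathWeight wt' (l.map fun x => x - k)
          = pathWeight (fun a b => wt (a + k) (b + k)) (l.map fun x => x - k) := by
            refine pathWeight_congr (fun a b ha hab hb => (h a b ha hab hb)) hch (h' := 1)
              ?_ le_rfl ?_
            · rw [List.head?_map, hh]; simp
            · rw [List.getLast?_map, hl]; simp
        _ = pathWeight wt ((l.map fun x => x - k).map (· + k)) := (pathWeight_map_add _ _ _).symm
        _ = pathWeight wt l := by rw [hmap]

lemma wtOf_le_one {n : ℕ} (w : Omega n) : ∀ a b, wtOf w a b ≤ 1 := by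
  intro a b; unfold wtOf; split <;> [skip; omega]; split <;> omega

lemma maxW_self {wt : ℕ → ℕ → ℕ} (hwt : ∀ x y, wt x y ≤ 1) (a : ℕ) : maxW wt a a = 0 := by
  refine Nat.le_antisymm (maxW_le (achievable_nonempty le_rfl) ?_) (by omega)
  rintro m ⟨l, ⟨hc, hh, hl⟩, rfl⟩
  have := pathWeight_le_sub hwt hc hh hl
  omega

lemma X_zero (w : Omega 0) : X 0 w = 0 := maxW_empty (by omega)

lemma X_one (w : Omega 1) : X 1 w = 0 := maxW_self (wtOf_le_one w) 1

-- generic sum tools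
lemma sum_prod_bool {α : Type*} [Fintype α] [DecidableEq α] (φ : Bool → ℝ)
    (h : φ true + φ false = 1) : ∑ w : α → Bool, ∏ e, φ (w e) = 1 := by
  have := Finset.prod_univ_sum (fun _ : α => (Finset.univ : Finset Bool)) (fun _ b => φ b)
  rw [Fintype.piFinset_univ] at this
  rw [← this]
  simp [h]

lemma sum_split {α : Type*} [Fintype α] [DecidableEq α] (φ : Bool → ℝ) (P : α → Prop)
    [DecidablePred P] (F : ({x // P x} → Bool) → ℝ) (G : ({x // ¬ P x} → Bool) → ℝ) :
    ∑ w : α → Bool, (∏ e, φ (w e)) * (F (fun x => w x.1) * G (fun x => w x.1))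
      = (∑ u : {x // P x} → Bool, (∏ x, φ (u x)) * F u)
        * (∑ v : {x // ¬ P x} → Bool, (∏ x, φ (v x)) * G v) := by
  rw [Finset.sum_mul_sum]
  rw [← Equiv.sum_comp (Equiv.piEquivPiSubtypeProd P (fun _ => Bool)).symm
    (fun w : α → Bool => (∏ e, φ (w e)) * (F (fun x => w x.1) * G (fun x => w x.1)))]
  rw [Fintype.sum_prod_type]
  refine Finset.sum_congr rfl (fun u _ => Finset.sum_congr rfl (fun v _ => ?_))
  set w : α → Bool := (Equiv.piEquivPiSubtypeProd P (fun _ => Bool)).symm (u, v) with hw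
  have hwx : ∀ x, w x = if h : P x then u ⟨x, h⟩ else v ⟨x, h⟩ := by
    intro x; rw [hw, Equiv.piEquivPiSubtypeProd_symm_apply]
  have hu : (fun x : {x // P x} => w x.1) = u := by
    funext x; rw [hwx x.1, dif_pos x.2]
  have hv : (fun x : {x // ¬ P x} => w x.1) = v := by
    funext x; rw [hwx x.1, dif_neg x.2]
  have hprod : (∏ e, φ (w e)) = (∏ x : {x // P x}, φ (u x)) * ∏ x : {x // ¬ P x}, φ (v x) := by
    rw [← Fintype.prod_subtype_mul_prod_subtype P (fun e => φ (w e))]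
    congr 1
    · exact Finset.prod_congr rfl (fun x _ => by rw [hwx x.1, dif_pos x.2])
    · exact Finset.prod_congr rfl (fun x _ => by rw [hwx x.1, dif_neg x.2])
  rw [hu, hv, hprod]; ring

lemma sum_ind_false {α : Type*} [Fintype α] [DecidableEq α] (φ : Bool → ℝ) :
    ∑ u : α → Bool, (∏ x, φ (u x)) * (if ∀ x, u x = false then (1:ℝ) else 0)
      = φ false ^ Fintype.card α := by
  have : ∀ u : α → Bool, (∀ x, u x = false) ↔ u = fun _ => false := by
    intro u; constructor
    · intro h; funext x; exact h x
    · intro h x; rw [h]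
  simp_rw [this]
  rw [Finset.sum_eq_single (fun _ => false)]
  · simp [Finset.prod_const]
  · intro b _ hb; rw [if_neg hb, mul_zero]
  · intro h; exact absurd (Finset.mem_univ _) h

lemma sum_ind_exists {α : Type*} [Fintype α] [DecidableEq α] (φ : Bool → ℝ)
    (h : φ true + φ false = 1) :
    ∑ u : α → Bool, (∏ x, φ (u x)) * (if ∃ x, u x = true then (1:ℝ) else 0)
      = 1 - φ false ^ Fintype.card α := by
  have key : ∀ u : α → Bool, (if ∃ x, u x = true then (1:ℝ) else 0)
      = 1 - (if ∀ x, u x = false then (1:ℝ) else 0) := by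
    intro u
    by_cases hex : ∃ x, u x = true
    · rw [if_pos hex, if_neg, sub_zero]
      rintro hall; obtain ⟨x, hx⟩ := hex; rw [hall x] at hx; simp at hx
    · rw [if_neg hex, if_pos, sub_self]
      intro x; by_contra hx; exact hex ⟨x, by simpa using hx⟩
  simp_rw [key, mul_sub, mul_one, Finset.sum_sub_distrib]
  rw [sum_prod_bool φ h, sum_ind_false φ]

-- counting lemmas
def eqvFinLt (n m : ℕ) (h : m ≤ n) : {a : Fin n // (a : ℕ) < m} ≃ Fin m where
  toFun x := ⟨x.1.1, x.2⟩
  invFun y := ⟨⟨y.1, by omega⟩, y.2⟩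
  left_inv x := rfl
  right_inv y := rfl

lemma card_fin_lt (n m : ℕ) (h : m ≤ n) : Fintype.card {a : Fin n // (a : ℕ) < m} = m := by
  rw [Fintype.card_congr (eqvFinLt n m h), Fintype.card_fin]

def eqvSecondEq (n i : ℕ) (h2 : 2 ≤ i) (hin : i ≤ n) :
    {e : Edge n // ((e : Fin n × Fin n).2 : ℕ) = i - 1} ≃ {a : Fin n // (a : ℕ) < i - 1} where
  toFun e := ⟨e.1.1.1, by have := e.1.2; have := e.2; omega⟩
  invFun a := ⟨⟨(a.1, ⟨i - 1, by omega⟩), by have := a.2; simpa using this⟩, rfl⟩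
  left_inv e := by
    rcases e with ⟨⟨⟨a, b⟩, hab⟩, hb⟩
    have hbe : (⟨i - 1, by omega⟩ : Fin n) = b := Fin.ext (by simpa using hb.symm)
    simp [hbe]
  right_inv a := rfl

lemma card_second_eq (n i : ℕ) (h2 : 2 ≤ i) (hin : i ≤ n) :
    Fintype.card {e : Edge n // ((e : Fin n × Fin n).2 : ℕ) = i - 1} = i - 1 := by
  rw [Fintype.card_congr (eqvSecondEq n i h2 hin), card_fin_lt n (i-1) (by omega)]

def eqvSigma (n m : ℕ) :
    {e : Edge n // ((e : Fin n × Fin n).2 : ℕ) ≤ m}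
      ≃ Σ b : {b : Fin n // (b : ℕ) ≤ m}, {a : Fin n // (a : ℕ) < (b.1 : ℕ)} where
  toFun e := ⟨⟨e.1.1.2, e.2⟩, ⟨e.1.1.1, e.1.2⟩⟩
  invFun x := ⟨⟨(x.2.1, x.1.1), x.2.2⟩, x.1.2⟩
  left_inv e := rfl
  right_inv x := rfl

lemma card_second_le (n m : ℕ) (hmn : m + 1 ≤ n) :
    Fintype.card {e : Edge n // ((e : Fin n × Fin n).2 : ℕ) ≤ m} = (m + 1).choose 2 := by
  rw [Fintype.card_congr (eqvSigma n m), Fintype.card_sigma]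
  have step : ∀ b : {b : Fin n // (b : ℕ) ≤ m},
      Fintype.card {a : Fin n // (a : ℕ) < (b.1 : ℕ)} = (b.1 : ℕ) := by
    intro b; exact card_fin_lt n _ (le_of_lt b.1.2)
  rw [Finset.sum_congr rfl (fun b _ => step b)]
  have he : ∑ b : {b : Fin n // (b : ℕ) ≤ m}, ((b.1 : ℕ)) = ∑ c : Fin (m+1), (c : ℕ) := by
    refine Fintype.sum_equiv
      ((Equiv.subtypeEquivRight (fun a => by omega)).trans (eqvFinLt n (m+1) hmn)) _ _ ?_
    intro b; rfl
  rw [he, Fin.sum_univ_eq_sum_range (fun i => i) (m+1)]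
  have h2 := Finset.sum_range_id_mul_two (m+1)
  have h3 := Nat.choose_two_right (m+1)
  omega

-- the first vertex with an incoming weight-1 edge
def Dfun {n : ℕ} (w : Omega n) : ℕ :=
  if h : ∃ e, w e = true then
    sInf {m | ∃ e : Edge n, w e = true ∧ ((e : Fin n × Fin n).2 : ℕ) = m} + 1
  else 0

lemma Dfun_le {n : ℕ} (w : Omega n) : Dfun w ≤ n := by
  unfold Dfun
  split
  · next h =>
    obtain ⟨e, he⟩ := h
    have hne : {m | ∃ e : Edge n, w e = true ∧ ((e : Fin n × Fin n).2 : ℕ) = m}.Nonempty :=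
      ⟨_, e, he, rfl⟩
    obtain ⟨e', -, he'⟩ := Nat.sInf_mem hne
    have := e'.1.2.isLt
    omega
  · omega

lemma Dfun_ne_one {n : ℕ} (w : Omega n) : Dfun w ≠ 1 := by
  unfold Dfun
  split
  · next h =>
    intro hc
    have hne : {m | ∃ e : Edge n, w e = true ∧ ((e : Fin n × Fin n).2 : ℕ) = m}.Nonempty := by
      obtain ⟨e, he⟩ := h; exact ⟨_, e, he, rfl⟩
    obtain ⟨e', -, he'⟩ := Nat.sInf_mem hne
    have := e'.2
    omega
  · omega

lemma Dfun_zero_iff {n : ℕ} (w : Omega n) : Dfun w = 0 ↔ ∀ e, w e = false := by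
  unfold Dfun
  split
  · next h =>
    constructor
    · omega
    · intro hall; obtain ⟨e, he⟩ := h; rw [hall e] at he; simp at he
  · next h =>
    push_neg at h
    constructor
    · intro _ e; simpa using h e
    · intro _; rfl

lemma Dfun_eq_iff {n i : ℕ} (hi2 : 2 ≤ i) (w : Omega n) :
    Dfun w = i ↔
      (∀ e : Edge n, ((e : Fin n × Fin n).2 : ℕ) ≤ i - 2 → w e = false) ∧
      (∃ e : Edge n, ((e : Fin n × Fin n).2 : ℕ) = i - 1 ∧ w e = true) := by
  constructor
  · intro hD
    by_cases hex : ∃ e, w e = true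
    · rw [Dfun, dif_pos hex] at hD
      have hne : {m | ∃ e : Edge n, w e = true ∧ ((e : Fin n × Fin n).2 : ℕ) = m}.Nonempty := by
        obtain ⟨e, he⟩ := hex; exact ⟨_, e, he, rfl⟩
      obtain ⟨e', hw', hv'⟩ := Nat.sInf_mem hne
      constructor
      · intro e hle
        by_contra hcontra
        have hwe : w e = true := by simpa using hcontra
        have : sInf {m | ∃ e : Edge n, w e = true ∧ ((e : Fin n × Fin n).2 : ℕ) = m}
            ≤ ((e : Fin n × Fin n).2 : ℕ) := Nat.sInf_le ⟨e, hwe, rfl⟩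
        omega
      · exact ⟨e', by omega, hw'⟩
    · rw [Dfun, dif_neg hex] at hD; omega
  · rintro ⟨hall, e₀, hv₀, hw₀⟩
    have hex : ∃ e, w e = true := ⟨e₀, hw₀⟩
    rw [Dfun, dif_pos hex]
    have hne : {m | ∃ e : Edge n, w e = true ∧ ((e : Fin n × Fin n).2 : ℕ) = m}.Nonempty :=
      ⟨_, e₀, hw₀, rfl⟩
    have h1 : sInf {m | ∃ e : Edge n, w e = true ∧ ((e : Fin n × Fin n).2 : ℕ) = m} ≤ i - 1 :=
      Nat.sInf_le ⟨e₀, hw₀, hv₀⟩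
    obtain ⟨e₁, hw₁, hv₁⟩ := Nat.sInf_mem hne
    have h2 : ¬ ((e₁ : Fin n × Fin n).2 : ℕ) ≤ i - 2 := by
      intro hcon
      rw [hall e₁ hcon] at hw₁; simp at hw₁
    omega

-- case analysis handle on wtOf
lemma wtOf_cases {n : ℕ} (w : Omega n) (a b : ℕ) :
    wtOf w a b = 0 ∨
      ∃ e : Edge n, ((e : Fin n × Fin n).1 : ℕ) = a - 1 ∧ ((e : Fin n × Fin n).2 : ℕ) = b - 1 ∧
        1 ≤ a ∧ a < b ∧ b ≤ n ∧ wtOf w a b = (if w e then 1 else 0) := by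
  unfold wtOf
  split
  · next h => exact Or.inr ⟨_, rfl, rfl, h.1, h.2.1, h.2.2, rfl⟩
  · exact Or.inl rfl

lemma wt_low_zero {n i : ℕ} (hi2 : 2 ≤ i) (w : Omega n)
    (hall : ∀ e : Edge n, ((e : Fin n × Fin n).2 : ℕ) ≤ i - 2 → w e = false) :
    ∀ a b, b < i → wtOf w a b = 0 := by
  intro a b hb
  rcases wtOf_cases w a b with h | ⟨e, h1, h2, h3, h4, h5, h6⟩
  · exact h
  · rw [h6, hall e (by omega)]; rfl

lemma wtOf_canon {n : ℕ} (w : Omega n) (a b : Fin n) (hab : (a : ℕ) < (b : ℕ)) :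
    wtOf w ((a : ℕ) + 1) ((b : ℕ) + 1) = (if w ⟨(a, b), hab⟩ then 1 else 0) := by
  unfold wtOf
  rw [dif_pos ⟨by omega, by omega, by omega⟩]
  have he : (⟨(⟨(a : ℕ) + 1 - 1, by omega⟩, ⟨(b : ℕ) + 1 - 1, by omega⟩),
      by show (a : ℕ) + 1 - 1 < (b : ℕ) + 1 - 1; omega⟩ : Edge n) = ⟨(a, b), hab⟩ := by
    apply Subtype.ext
    apply Prod.ext <;> apply Fin.ext <;> simp
  rw [he]

lemma wt_edge_one {n i : ℕ} (hi2 : 2 ≤ i) (hin : i ≤ n) (w : Omega n)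
    (hex : ∃ e : Edge n, ((e : Fin n × Fin n).2 : ℕ) = i - 1 ∧ w e = true) :
    ∃ j, 1 ≤ j ∧ j < i ∧ wtOf w j i = 1 := by
  obtain ⟨⟨⟨a, b⟩, hab⟩, hv, hw⟩ := hex
  simp only at hv hw hab
  refine ⟨(a : ℕ) + 1, by omega, by omega, ?_⟩
  have hi : i = (b : ℕ) + 1 := by omega
  rw [hi, wtOf_canon w a b hab, hw]
  rfl

-- lifting edges of the small tournament into the big one
def liftE (n i : ℕ) (h2 : 2 ≤ i) (hin : i ≤ n) (e : Edge (n - i + 1)) : Edge n :=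
  ⟨(⟨(e.1.1 : ℕ) + (i - 1), by have := e.1.1.isLt; omega⟩,
    ⟨(e.1.2 : ℕ) + (i - 1), by have := e.1.2.isLt; omega⟩),
   by show (e.1.1 : ℕ) + (i - 1) < (e.1.2 : ℕ) + (i - 1); have := e.2; omega⟩

lemma wtOf_lift {n i : ℕ} (h2 : 2 ≤ i) (hin : i ≤ n) (w : Omega n) :
    ∀ a b, 1 ≤ a → a < b → b ≤ n - i + 1 →
      wtOf (fun e => w (liftE n i h2 hin e)) a b = wtOf w (a + (i - 1)) (b + (i - 1)) := by
  intro a b ha hab hb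
  unfold wtOf
  rw [dif_pos ⟨ha, hab, hb⟩, dif_pos ⟨by omega, by omega, by omega⟩]
  have he : liftE n i h2 hin
      ⟨(⟨a - 1, by omega⟩, ⟨b - 1, by omega⟩), by show a - 1 < b - 1; omega⟩
      = ⟨(⟨a + (i - 1) - 1, by omega⟩, ⟨b + (i - 1) - 1, by omega⟩),
          by show a + (i - 1) - 1 < b + (i - 1) - 1; omega⟩ := by
    apply Subtype.ext
    apply Prod.ext <;> apply Fin.ext <;> simp [liftE] <;> omega
  simp only [he]

lemma maxW_shift_inst {n i : ℕ} (h2 : 2 ≤ i) (hin : i ≤ n) (w : Omega n) :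
    maxW (wtOf w) i n = X (n - i + 1) (fun e => w (liftE n i h2 hin e)) := by
  rw [X, maxW_shift (wt := wtOf w) (k := i - 1) (m := n - i + 1)
    (fun a b ha hab hb => wtOf_lift h2 hin w a b ha hab hb)]
  congr 1 <;> omega

lemma X_fiber {n i : ℕ} (h2 : 2 ≤ i) (hin : i ≤ n) (w : Omega n) (hD : Dfun w = i) :
    X n w = X (n - i + 1) (fun e => w (liftE n i h2 hin e)) + 1 := by
  obtain ⟨hall, hex⟩ := (Dfun_eq_iff h2 w).mp hD
  rw [X, maxW_step (wtOf_le_one w) h2 hin (wt_low_zero h2 w hall)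
    (wt_edge_one h2 hin w hex), maxW_shift_inst h2 hin w]

def phi (p : ℝ) : Bool → ℝ := fun b => if b then p else 1 - p

lemma phi_sum (p : ℝ) : phi p true + phi p false = 1 := by simp [phi]

lemma phi_false (p : ℝ) : phi p false = 1 - p := rfl

lemma prob_eq (p : ℝ) {n : ℕ} (w : Omega n) : prob p w = ∏ e, phi p (w e) := rfl

abbrev P1 (n i : ℕ) : Edge n → Prop := fun e => ((e : Fin n × Fin n).2 : ℕ) ≤ i - 1

abbrev Qin (n i : ℕ) : Edge n → Prop := fun e => ((e : Fin n × Fin n).2 : ℕ) ≤ i - 2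

abbrev QL (n i : ℕ) : Edge n → Prop := fun e => i - 1 ≤ ((e : Fin n × Fin n).1 : ℕ)

lemma liftE_not_P1 {n i : ℕ} (h2 : 2 ≤ i) (hin : i ≤ n) (e' : Edge (n - i + 1)) :
    ¬ P1 n i (liftE n i h2 hin e') := by
  have := e'.2
  simp only [P1, liftE, not_le]
  omega

def eqvLate (n i : ℕ) (h2 : 2 ≤ i) (hin : i ≤ n) :
    Edge (n - i + 1) ≃ {x : {e : Edge n // ¬ P1 n i e} // QL n i x.1} where
  toFun e' := ⟨⟨liftE n i h2 hin e', liftE_not_P1 h2 hin e'⟩, by simp [QL, liftE]⟩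
  invFun x :=
    ⟨(⟨((x.1.1 : Fin n × Fin n).1 : ℕ) - (i - 1), by
        have := (x.1.1 : Fin n × Fin n).1.isLt; omega⟩,
      ⟨((x.1.1 : Fin n × Fin n).2 : ℕ) - (i - 1), by
        have := (x.1.1 : Fin n × Fin n).2.isLt; omega⟩),
      by
        show ((x.1.1 : Fin n × Fin n).1 : ℕ) - (i - 1) < ((x.1.1 : Fin n × Fin n).2 : ℕ) - (i - 1)
        have h1 := x.1.1.2
        have h2' := x.1.2
        have h3 := x.2
        simp only [P1, not_le] at h2'
        simp only [QL] at h3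
        omega⟩
  left_inv e' := by
    apply Subtype.ext
    apply Prod.ext <;> apply Fin.ext <;> simp [liftE]
  right_inv x := by
    obtain ⟨⟨⟨⟨a, b⟩, hab⟩, hnp2⟩, hq⟩ := x
    have h2' : ¬ ((b : ℕ) ≤ i - 1) := hnp2
    have h3 : i - 1 ≤ (a : ℕ) := hq
    apply Subtype.ext
    apply Subtype.ext
    apply Subtype.ext
    rw [Prod.ext_iff]
    constructor <;> (apply Fin.ext; simp [liftE]; omega)

-- Step D : the early-edges factor
lemma stepD (p : ℝ) {n i : ℕ} (h2 : 2 ≤ i) (hin : i ≤ n) :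
    ∑ u : {e : Edge n // P1 n i e} → Bool, (∏ x, phi p (u x)) *
      (if ((∀ x : {e : Edge n // P1 n i e}, Qin n i x.1 → u x = false) ∧
          (∃ x : {e : Edge n // P1 n i e}, ((x.1 : Fin n × Fin n).2 : ℕ) = i - 1 ∧ u x = true))
        then (1:ℝ) else 0)
      = (1 - p) ^ ((i - 1).choose 2) * (1 - (1 - p) ^ (i - 1)) := by
  classical
  have hsplit : ∀ u : {e : Edge n // P1 n i e} → Bool,
      (if ((∀ x : {e : Edge n // P1 n i e}, Qin n i x.1 → u x = false) ∧
          (∃ x : {e : Edge n // P1 n i e}, ((x.1 : Fin n × Fin n).2 : ℕ) = i - 1 ∧ u x = true))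
        then (1:ℝ) else 0)
      = (if (∀ y : {x : {e : Edge n // P1 n i e} // Qin n i x.1},
              (fun y => u y.1) y = false) then (1:ℝ) else 0)
        * (if (∃ y : {x : {e : Edge n // P1 n i e} // ¬ Qin n i x.1},
              (fun y => u y.1) y = true) then (1:ℝ) else 0) := by
    intro u
    have hiff1 : (∀ x : {e : Edge n // P1 n i e}, Qin n i x.1 → u x = false)
        ↔ (∀ y : {x : {e : Edge n // P1 n i e} // Qin n i x.1}, u y.1 = false) := by
      constructor
      · intro h y; exact h y.1 y.2
      · intro h x hx; exact h ⟨x, hx⟩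
    have hiff2 : (∃ x : {e : Edge n // P1 n i e}, ((x.1 : Fin n × Fin n).2 : ℕ) = i - 1 ∧ u x = true)
        ↔ (∃ y : {x : {e : Edge n // P1 n i e} // ¬ Qin n i x.1}, u y.1 = true) := by
      constructor
      · rintro ⟨x, hv, hu⟩
        exact ⟨⟨x, by simp only [Qin, not_le]; omega⟩, hu⟩
      · rintro ⟨y, hu⟩
        refine ⟨y.1, ?_, hu⟩
        have ha := y.1.2
        have hb := y.2
        simp only [P1] at ha
        simp only [Qin, not_le] at hb
        omega
    simp only [hiff1, hiff2]
    by_cases hA : (∀ y : {x : {e : Edge n // P1 n i e} // Qin n i x.1}, u y.1 = false) <;>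
      by_cases hB : (∃ y : {x : {e : Edge n // P1 n i e} // ¬ Qin n i x.1}, u y.1 = true) <;>
      simp [hA, hB]
  rw [Finset.sum_congr rfl (fun u _ => by rw [hsplit u])]
  rw [sum_split (phi p) (fun x : {e : Edge n // P1 n i e} => Qin n i x.1)
    (fun uI => if (∀ y, uI y = false) then (1:ℝ) else 0)
    (fun uT => if (∃ y, uT y = true) then (1:ℝ) else 0)]
  rw [sum_ind_false (phi p), sum_ind_exists (phi p) (phi_sum p)]
  have hc1 : Fintype.card {x : {e : Edge n // P1 n i e} // Qin n i x.1}
      = (i - 1).choose 2 := by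
    rw [Fintype.card_congr (Equiv.subtypeSubtypeEquivSubtype
      (p := P1 n i) (q := Qin n i) (fun {x} hx => le_trans hx (by omega : i - 2 ≤ i - 1)))]
    have := card_second_le n (i - 2) (by omega)
    rw [show i - 2 + 1 = i - 1 by omega] at this
    exact this
  have hc2 : Fintype.card {x : {e : Edge n // P1 n i e} // ¬ Qin n i x.1} = i - 1 := by
    rw [Fintype.card_congr ((Equiv.subtypeSubtypeEquivSubtypeInter
      (P1 n i) (fun e => ¬ Qin n i e)).trans (Equiv.subtypeEquivRight
        (q := fun e : Edge n => ((e : Fin n × Fin n).2 : ℕ) = i - 1) (fun e => by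
        simp only [P1, Qin, not_le]
        omega)))]
    exact card_second_eq n i h2 hin
  rw [hc1, hc2, phi_false]

-- Step E : the rest factor
lemma stepE (p : ℝ) {n i : ℕ} (h2 : 2 ≤ i) (hin : i ≤ n) :
    ∑ v : {e : Edge n // ¬ P1 n i e} → Bool, (∏ x, phi p (v x)) *
      ((X (n - i + 1) (fun e' => v ⟨liftE n i h2 hin e', liftE_not_P1 h2 hin e'⟩) : ℝ) + 1)
      = EX p (n - i + 1) + 1 := by
  classical
  have hsh : ∀ v : {e : Edge n // ¬ P1 n i e} → Bool,
      (∏ x, phi p (v x)) *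
        ((X (n - i + 1) (fun e' => v ⟨liftE n i h2 hin e', liftE_not_P1 h2 hin e'⟩) : ℝ) + 1)
      = (∏ x, phi p (v x)) *
        (((fun vL : {x : {e : Edge n // ¬ P1 n i e} // QL n i x.1} → Bool =>
            ((X (n - i + 1) (fun e' => vL (eqvLate n i h2 hin e')) : ℝ) + 1))
          (fun y => v y.1)) * ((fun _ : {x : {e : Edge n // ¬ P1 n i e} // ¬ QL n i x.1} → Bool =>
            (1:ℝ)) (fun y => v y.1))) := by
    intro v
    simp only [mul_one]
    rfl
  rw [Finset.sum_congr rfl (fun v _ => hsh v)]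
  rw [sum_split (phi p) (fun x : {e : Edge n // ¬ P1 n i e} => QL n i x.1)
    (fun vL => ((X (n - i + 1) (fun e' => vL (eqvLate n i h2 hin e')) : ℝ) + 1))
    (fun _ => (1:ℝ))]
  have h2nd : ∑ vC : {x : {e : Edge n // ¬ P1 n i e} // ¬ QL n i x.1} → Bool,
      (∏ x, phi p (vC x)) * (1:ℝ) = 1 := by
    rw [Finset.sum_congr rfl (fun vC _ => mul_one _)]
    exact sum_prod_bool (phi p) (phi_sum p)
  rw [h2nd, mul_one]
  have h1st : ∑ vL : {x : {e : Edge n // ¬ P1 n i e} // QL n i x.1} → Bool,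
      (∏ x, phi p (vL x)) * ((X (n - i + 1) (fun e' => vL (eqvLate n i h2 hin e')) : ℝ) + 1)
      = ∑ g : Omega (n - i + 1), (∏ e', phi p (g e')) * ((X (n - i + 1) g : ℝ) + 1) := by
    set Ψ := Equiv.arrowCongr (eqvLate n i h2 hin).symm (Equiv.refl Bool) with hΨdef
    rw [← Equiv.sum_comp Ψ
      (fun g : Omega (n - i + 1) => (∏ e', phi p (g e')) * ((X (n - i + 1) g : ℝ) + 1))]
    refine Finset.sum_congr rfl (fun vL _ => ?_)
    have hΨ : Ψ vL = fun e' => vL (eqvLate n i h2 hin e') := by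
      funext e'
      simp [hΨdef, Equiv.arrowCongr_apply, Equiv.symm_symm]
    simp only [hΨ]
    have hprod : (∏ e', phi p (vL (eqvLate n i h2 hin e'))) = ∏ x, phi p (vL x) :=
      Equiv.prod_comp (eqvLate n i h2 hin) (fun x => phi p (vL x))
    rw [hprod]
  rw [h1st]
  have : ∀ g : Omega (n - i + 1), (∏ e', phi p (g e')) * ((X (n - i + 1) g : ℝ) + 1)
      = prob p g * (X (n - i + 1) g : ℝ) + prob p g := by
    intro g; rw [prob_eq]; ring
  rw [Finset.sum_congr rfl (fun g _ => this g), Finset.sum_add_distrib]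
  have : ∑ g : Omega (n - i + 1), prob p g = 1 := by
    rw [Finset.sum_congr rfl (fun g _ => prob_eq p g)]
    exact sum_prod_bool (phi p) (phi_sum p)
  rw [this, EX]

-- the fiber sum
lemma fiber_sum (p : ℝ) {n i : ℕ} (h2 : 2 ≤ i) (hin : i ≤ n) :
    ∑ w ∈ Finset.univ.filter (fun w : Omega n => Dfun w = i), prob p w * (X n w : ℝ)
      = (1 - (1 - p) ^ (i - 1)) * (1 - p) ^ ((i - 1).choose 2) * (EX p (n - i + 1) + 1) := by
  classical
  rw [Finset.sum_filter]
  have key : ∀ w : Omega n,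
      (if Dfun w = i then prob p w * (X n w : ℝ) else 0)
      = (∏ e, phi p (w e)) *
          (((fun u : {e : Edge n // P1 n i e} → Bool =>
            if ((∀ x : {e : Edge n // P1 n i e}, Qin n i x.1 → u x = false) ∧
                (∃ x : {e : Edge n // P1 n i e}, ((x.1 : Fin n × Fin n).2 : ℕ) = i - 1 ∧ u x = true))
            then (1:ℝ) else 0) (fun x => w x.1))
          * ((fun v : {e : Edge n // ¬ P1 n i e} → Bool =>
              ((X (n - i + 1) (fun e' => v ⟨liftE n i h2 hin e', liftE_not_P1 h2 hin e'⟩) : ℝ) + 1))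
            (fun x => w x.1))) := by
    intro w
    simp only []
    by_cases hD : Dfun w = i
    · rw [if_pos hD, ← prob_eq]
      obtain ⟨hall, hex⟩ := (Dfun_eq_iff h2 w).mp hD
      have hcond : ((∀ x : {e : Edge n // P1 n i e}, Qin n i x.1 → w x.1 = false) ∧
          (∃ x : {e : Edge n // P1 n i e}, ((x.1 : Fin n × Fin n).2 : ℕ) = i - 1 ∧ w x.1 = true)) := by
        constructor
        · intro x hx; exact hall x.1 hx
        · obtain ⟨e, hv, hw⟩ := hex
          exact ⟨⟨e, by simp only [P1]; omega⟩, hv, hw⟩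
      rw [if_pos hcond, one_mul]
      rw [X_fiber h2 hin w hD]
      push_cast
      ring
    · rw [if_neg hD]
      have hncond : ¬ ((∀ x : {e : Edge n // P1 n i e}, Qin n i x.1 → w x.1 = false) ∧
          (∃ x : {e : Edge n // P1 n i e}, ((x.1 : Fin n × Fin n).2 : ℕ) = i - 1 ∧ w x.1 = true)) := by
        rintro ⟨hall, hex⟩
        refine hD ((Dfun_eq_iff h2 w).mpr ⟨?_, ?_⟩)
        · intro e he
          exact hall ⟨e, by simp only [P1]; omega⟩ he
        · obtain ⟨x, hv, hw⟩ := hex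
          exact ⟨x.1, hv, hw⟩
      rw [if_neg hncond, zero_mul, mul_zero]
  rw [Finset.sum_congr rfl (fun w _ => key w)]
  rw [sum_split (phi p) (P1 n i)
    (fun u : {e : Edge n // P1 n i e} → Bool =>
      if ((∀ x : {e : Edge n // P1 n i e}, Qin n i x.1 → u x = false) ∧
          (∃ x : {e : Edge n // P1 n i e}, ((x.1 : Fin n × Fin n).2 : ℕ) = i - 1 ∧ u x = true))
      then (1:ℝ) else 0)
    (fun v : {e : Edge n // ¬ P1 n i e} → Bool =>
      ((X (n - i + 1) (fun e' => v ⟨liftE n i h2 hin e', liftE_not_P1 h2 hin e'⟩) : ℝ) + 1))]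
  rw [stepD p h2 hin, stepE p h2 hin]
  ring

lemma EX_zero (p : ℝ) : EX p 0 = 0 := by
  simp [EX, X_zero]

lemma EX_one (p : ℝ) : EX p 1 = 0 := by
  simp [EX, X_one]

lemma EX_rec (p : ℝ) (n : ℕ) (hn : 2 ≤ n) :
    EX p n = ∑ i ∈ Finset.Icc 2 n,
      (1 - (1 - p) ^ (i - 1)) * (1 - p) ^ ((i - 1).choose 2) * (EX p (n - i + 1) + 1) := by
  classical
  have hmap : ∀ w ∈ (Finset.univ : Finset (Omega n)), Dfun w ∈ Finset.Icc 0 n := by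
    intro w _
    simp only [Finset.mem_Icc]
    exact ⟨Nat.zero_le _, Dfun_le w⟩
  have hfib := Finset.sum_fiberwise_of_maps_to hmap (fun w => prob p w * (X n w : ℝ))
  rw [EX, ← hfib]
  have hicc : Finset.Icc 0 n = insert 0 (insert 1 (Finset.Icc 2 n)) := by
    ext x
    simp only [Finset.mem_Icc, Finset.mem_insert]
    omega
  rw [hicc, Finset.sum_insert (by simp [Finset.mem_Icc]),
    Finset.sum_insert (by simp [Finset.mem_Icc])]
  have hz : ∑ w ∈ Finset.univ.filter (fun w : Omega n => Dfun w = 0),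
      prob p w * (X n w : ℝ) = 0 := by
    refine Finset.sum_eq_zero (fun w hw => ?_)
    rw [Finset.mem_filter] at hw
    have hall := (Dfun_zero_iff w).mp hw.2
    have hwt : ∀ a b, wtOf w a b = 0 := by
      intro a b
      rcases wtOf_cases w a b with h | ⟨e, _, _, _, _, _, h6⟩
      · exact h
      · rw [h6, hall e]; rfl
    have hX : X n w = 0 := maxW_zero hwt (by omega)
    rw [hX]; simp
  have ho : ∑ w ∈ Finset.univ.filter (fun w : Omega n => Dfun w = 1),
      prob p w * (X n w : ℝ) = 0 := by
    refine Finset.sum_eq_zero (fun w hw => ?_)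
    rw [Finset.mem_filter] at hw
    exact absurd hw.2 (Dfun_ne_one w)
  rw [hz, ho, zero_add, zero_add]
  refine Finset.sum_congr rfl (fun i hi => ?_)
  rw [Finset.mem_Icc] at hi
  exact fiber_sum p hi.1 hi.2


open Finset in
/-- the recurrence for `f(n) = E[X_n]`. -/
theorem stmt3 (p : ℝ) (hp : p ∈ Set.Ioo (0 : ℝ) 1) :
    EX p 0 = 0 ∧ EX p 1 = 0 ∧
      ∀ n : ℕ, 2 ≤ n →
        EX p n = ∑ i ∈ Finset.Icc 2 n,
          (1 - (1 - p) ^ (i - 1)) * (1 - p) ^ ((i - 1).choose 2) * (EX p (n - i + 1) + 1) := by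
  exact ⟨EX_zero p, EX_one p, fun n hn => EX_rec p n hn⟩

end
end

section
/- The probability generating function Z_n(t) := E[t^{X_n}] of the maximum-weight path satisfies the recurrence Z_n(t) = Σ_{i=1}^{n-1} t·[(1-p)^{C(i,2)} - (1-p)^{C(i+1,2)}]·Z_{n-i}(t) + (1-p)^{C(n,2)} for n ≥ 1. -/
open Finset Filter

noncomputable section

/-- `Z_n(t) = E[t^{X_n}]`, the probability generating function of `X_n`,
as a polynomial in `t`. -/
def Zpoly (p : ℝ) (n : ℕ) : Polynomial ℝ :=
  ∑ w : Omega n, Polynomial.C (prob p w) * Polynomial.X ^ (X n w)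

namespace Aux

lemma pathWeight_nil (wt : ℕ → ℕ → ℕ) : pathWeight wt [] = 0 := rfl

lemma pathWeight_single (wt : ℕ → ℕ → ℕ) (a : ℕ) : pathWeight wt [a] = 0 := rfl

lemma pathWeight_cons_cons (wt : ℕ → ℕ → ℕ) (a b : ℕ) (t : List ℕ) :
    pathWeight wt (a :: b :: t) = wt a b + pathWeight wt (b :: t) := by
  simp [pathWeight]

lemma pathWeight_cons (wt : ℕ → ℕ → ℕ) (a : ℕ) (l : List ℕ) (h : l ≠ []) :
    pathWeight wt (a :: l) = wt a (l.head h) + pathWeight wt l := by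
  cases l with
  | nil => exact absurd rfl h
  | cons b t => simp [pathWeight_cons_cons]

lemma pathWeight_le_length {wt : ℕ → ℕ → ℕ} (hwt : ∀ x y, wt x y ≤ 1) :
    ∀ l : List ℕ, pathWeight wt l ≤ l.length
  | [] => by simp [pathWeight_nil]
  | [a] => by simp [pathWeight_single]
  | a :: b :: t => by
    rw [pathWeight_cons_cons]
    have := pathWeight_le_length hwt (b :: t)
    have := hwt a b
    simp only [List.length_cons] at *
    omega

lemma mem_le_of_pairwise : ∀ {l : List ℕ}, l.Pairwise (· < ·) → ∀ {b}, l.getLast? = some b →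
    ∀ x ∈ l, x ≤ b := by
  intro l hl
  induction l with
  | nil => intro b hb; simp at hb
  | cons a t ih =>
    intro b hb x hx
    cases t with
    | nil =>
      simp at hb hx; omega
    | cons c s =>
      rw [List.getLast?_cons_cons] at hb
      have hpt : (c :: s).Pairwise (· < ·) := (List.pairwise_cons.1 hl).2
      have hat : ∀ y ∈ c :: s, a < y := (List.pairwise_cons.1 hl).1
      rcases List.mem_cons.1 hx with rfl | hx'
      · have hbmem : b ∈ c :: s := by
          have := List.mem_getLast?_eq_getLast (l := c :: s) (x := b) hb
          rcases this with ⟨h1, h2⟩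
          exact h2 ▸ List.getLast_mem h1
        exact le_of_lt (hat b hbmem)
      · exact ih hpt hb x hx'

lemma mem_ge_of_pairwise {l : List ℕ} (hl : l.Pairwise (· < ·)) {a : ℕ}
    (ha : l.head? = some a) : ∀ x ∈ l, a ≤ x := by
  cases l with
  | nil => simp at ha
  | cons c t =>
    simp only [List.head?_cons, Option.some.injEq] at ha
    subst ha
    intro x hx
    rcases List.mem_cons.1 hx with rfl | hx'
    · exact le_refl x
    · exact le_of_lt ((List.pairwise_cons.1 hl).1 x hx')

lemma isPath_mem_bounds {a b : ℕ} {l : List ℕ} (h : IsPath a b l) :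
    ∀ x ∈ l, a ≤ x ∧ x ≤ b := by
  obtain ⟨hc, hh, hg⟩ := h
  have hp : l.Pairwise (· < ·) := List.isChain_iff_pairwise.1 hc
  intro x hx
  exact ⟨mem_ge_of_pairwise hp hh x hx, mem_le_of_pairwise hp hg x hx⟩

lemma isPath_length_le {a b : ℕ} {l : List ℕ} (h : IsPath a b l) : l.length ≤ b + 1 := by
  obtain ⟨hc, hh, hg⟩ := h
  have hp : l.Pairwise (· < ·) := List.isChain_iff_pairwise.1 hc
  have hnd : l.Nodup := hp.imp (fun h => Nat.ne_of_lt h)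
  have hsub : ∀ x ∈ l, x ∈ Finset.range (b + 1) := by
    intro x hx
    simp only [Finset.mem_range]
    have := mem_le_of_pairwise hp hg x hx
    omega
  calc l.length = l.toFinset.card := (List.toFinset_card_of_nodup hnd).symm
    _ ≤ (Finset.range (b + 1)).card := Finset.card_le_card (fun x hx => by
        exact hsub x (List.mem_toFinset.1 hx))
    _ = b + 1 := Finset.card_range _

lemma pathSet_bddAbove {wt : ℕ → ℕ → ℕ} (hwt : ∀ x y, wt x y ≤ 1) (a b : ℕ) :
    BddAbove {m | ∃ l, IsPath a b l ∧ pathWeight wt l = m} := by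
  refine ⟨b + 1, fun m hm => ?_⟩
  obtain ⟨l, hl, rfl⟩ := hm
  exact le_trans (pathWeight_le_length hwt l) (isPath_length_le hl)

lemma pathSet_nonempty {a b : ℕ} (hab : a ≤ b) (wt : ℕ → ℕ → ℕ) :
    Set.Nonempty {m | ∃ l, IsPath a b l ∧ pathWeight wt l = m} := by
  rcases eq_or_lt_of_le hab with rfl | h
  · exact ⟨0, [a], ⟨List.isChain_singleton a, rfl, rfl⟩, rfl⟩
  · exact ⟨wt a b, [a, b], ⟨List.isChain_pair.2 h, rfl, rfl⟩, by simp [pathWeight]⟩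

lemma le_maxW {wt : ℕ → ℕ → ℕ} (hwt : ∀ x y, wt x y ≤ 1) {a b m : ℕ}
    (hm : m ∈ {m | ∃ l, IsPath a b l ∧ pathWeight wt l = m}) : m ≤ maxW wt a b :=
  le_csSup (pathSet_bddAbove hwt a b) hm

lemma maxW_le {wt : ℕ → ℕ → ℕ} {a b K : ℕ} (hab : a ≤ b)
    (h : ∀ l, IsPath a b l → pathWeight wt l ≤ K) : maxW wt a b ≤ K := by
  refine csSup_le (pathSet_nonempty hab wt) ?_
  rintro m ⟨l, hl, rfl⟩
  exact h l hl

lemma maxW_mem {wt : ℕ → ℕ → ℕ} (hwt : ∀ x y, wt x y ≤ 1) {a b : ℕ} (hab : a ≤ b) :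
    ∃ l, IsPath a b l ∧ pathWeight wt l = maxW wt a b :=
  Nat.sSup_mem (pathSet_nonempty hab wt) (pathSet_bddAbove hwt a b)

end Aux

namespace Aux
lemma pathWeight_append {wt : ℕ → ℕ → ℕ} {l1 l2 : List ℕ} (h1 : l1 ≠ []) (h2 : l2 ≠ []) :
    pathWeight wt (l1 ++ l2) =
      pathWeight wt l1 + wt (l1.getLast h1) (l2.head h2) + pathWeight wt l2 := by
  induction l1 with
  | nil => exact absurd rfl h1
  | cons a t ih =>
    cases t with
    | nil =>
      cases l2 with
      | nil => exact absurd rfl h2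
      | cons b s => simp [pathWeight_cons_cons, pathWeight_single]
    | cons c s =>
      rw [show (a :: c :: s) ++ l2 = a :: c :: (s ++ l2) from rfl, pathWeight_cons_cons,
        show c :: (s ++ l2) = (c :: s) ++ l2 from rfl, ih (by simp), pathWeight_cons_cons]
      simp [List.getLast_cons]
      omega
end Aux

namespace Aux

lemma wtOf_le_one {n : ℕ} (w : Omega n) (a b : ℕ) : wtOf w a b ≤ 1 := by
  unfold wtOf; split
  · split <;> omega
  · omega

lemma wtOf_eq {n : ℕ} (w : Omega n) {a b : ℕ} (h : 1 ≤ a ∧ a < b ∧ b ≤ n) :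
    wtOf w a b = if w ⟨(⟨a - 1, by omega⟩, ⟨b - 1, by omega⟩), by show a - 1 < b - 1; omega⟩
      then 1 else 0 := by
  rw [wtOf, dif_pos h]

lemma wtOf_false {n : ℕ} (a b : ℕ) : wtOf (fun _ : Edge n => false) a b = 0 := by
  unfold wtOf; split <;> simp

/-- If all weights are 0, then `X n w = 0`. -/
lemma X_of_false (n : ℕ) (hn : 1 ≤ n) : X n (fun _ => false) = 0 := by
  refine Nat.le_antisymm ?_ (Nat.zero_le _)
  refine maxW_le hn ?_
  intro l hl
  have : ∀ l' : List ℕ, pathWeight (wtOf (fun _ : Edge n => false)) l' = 0 := by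
    intro l'
    induction l' with
    | nil => rfl
    | cons a t ih =>
      cases t with
      | nil => rfl
      | cons b s =>
        rw [pathWeight_cons_cons, wtOf_false, ih]
        
  simp [this l]

/-- weights vanish on pairs `a < b ≤ i` if all edges below `i` are false -/
lemma wtOf_zero_of_low {n i : ℕ} {w : Omega n}
    (h0 : ∀ e : Edge n, (e.1.2 : ℕ) < i → w e = false) {a b : ℕ} (hb : b ≤ i) :
    wtOf w a b = 0 := by
  unfold wtOf
  split
  · rename_i h
    rw [h0 _ (by simp; omega)]
    simp
  · rfl

lemma pathWeight_zero_of_all_low {n i : ℕ} {w : Omega n}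
    (h0 : ∀ e : Edge n, (e.1.2 : ℕ) < i → w e = false) :
    ∀ l : List ℕ, (∀ x ∈ l, x ≤ i) → pathWeight (wtOf w) l = 0 := by
  intro l
  induction l with
  | nil => intro _; rfl
  | cons a t ih =>
    intro hmem
    cases t with
    | nil => rfl
    | cons b s =>
      rw [pathWeight_cons_cons,
        wtOf_zero_of_low h0 (hmem b (by simp)),
        ih (fun x hx => hmem x (List.mem_cons_of_mem _ hx))]

/-- Key splitting lemma. -/
lemma X_split {n i : ℕ} (hi : 1 ≤ i) (hin : i < n) {w : Omega n}
    (h0 : ∀ e : Edge n, (e.1.2 : ℕ) < i → w e = false)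
    (h1 : ∃ e : Edge n, (e.1.2 : ℕ) = i ∧ w e = true) :
    X n w = 1 + maxW (wtOf w) (i + 1) n := by
  obtain ⟨e₀, he₀i, he₀w⟩ := h1
  -- an edge of weight one into vertex i+1
  set a := (e₀.1.1 : ℕ) + 1 with ha
  have hai : a ≤ i := by
    have := e₀.2; omega
  have hwa : wtOf w a (i + 1) = 1 := by
    rw [wtOf_eq w (by constructor; omega; constructor; omega; have := e₀.1.2.2; omega)]
    have : (⟨(⟨a - 1, by omega⟩, ⟨i + 1 - 1, by have := e₀.1.2.2; omega⟩),
        by show a - 1 < i + 1 - 1; omega⟩ : Edge n) = e₀ := by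
      apply Subtype.ext
      apply Prod.ext <;> apply Fin.ext <;> simp <;> omega
    rw [this, he₀w]
    simp
  apply Nat.le_antisymm
  · -- X n w ≤ 1 + maxW (i+1) n
    refine maxW_le (by omega) ?_
    intro l hl
    set l1 := l.takeWhile (fun x => x ≤ i) with hl1
    set l2 := l.dropWhile (fun x => x ≤ i) with hl2
    have hsplit : l1 ++ l2 = l := List.takeWhile_append_dropWhile ..
    have hl2ne : l2 ≠ [] := by
      intro hcon
      have hall : ∀ x ∈ l, x ≤ i := by
        intro x hx
        have : x ∈ l1 := by rw [← hsplit] at hx; simpa [hcon] using hx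
        have := List.mem_takeWhile_imp this
        simpa using this
      have hnmem : n ∈ l := by
        obtain ⟨h, h2⟩ := List.mem_getLast?_eq_getLast hl.2.2
        exact h2 ▸ List.getLast_mem h
      have := hall n hnmem; omega
    have hhead2 : ¬ ((l2.head hl2ne : ℕ) ≤ i) := by
      have := List.head_dropWhile_not (fun x : ℕ => decide (x ≤ i)) (l := l) (w := by
        simpa [hl2] using hl2ne)
      simpa [hl2] using this
    have hchain2 : l2.Chain' (· < ·) := hl.1.sublist (List.dropWhile_suffix _).sublist
    have hlast2 : l2.getLast? = some n := by
      rw [← hl.2.2, ← hsplit, List.getLast?_append_of_ne_nil _ hl2ne]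
    -- l2 as path from (i+1) (possibly prepended)
    have hl2w : pathWeight (wtOf w) l2 ≤ maxW (wtOf w) (i + 1) n := by
      by_cases hh : l2.head hl2ne = i + 1
      · refine le_maxW (wtOf_le_one w) ⟨l2, ⟨hchain2, ?_, hlast2⟩, rfl⟩
        rw [List.head?_eq_head hl2ne, hh]
      · have hgt : i + 1 < l2.head hl2ne := by omega
        have hpath : IsPath (i + 1) n ((i + 1) :: l2) := by
          refine ⟨List.isChain_cons.2 ⟨?_, hchain2⟩, rfl, ?_⟩
          · intro y hy
            rw [List.head?_eq_head hl2ne] at hy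
            cases hy; omega
          · rw [List.getLast?_cons, hlast2]; simp
        have : pathWeight (wtOf w) ((i+1) :: l2) = wtOf w (i+1) (l2.head hl2ne)
            + pathWeight (wtOf w) l2 := pathWeight_cons ..
        have hle := le_maxW (wtOf_le_one w) ⟨_, hpath, rfl⟩
        omega
    by_cases hl1e : l1 = []
    · rw [← hsplit, hl1e, List.nil_append]
      omega
    · have hw1 : pathWeight (wtOf w) l1 = 0 := by
        refine pathWeight_zero_of_all_low h0 l1 (fun x hx => ?_)
        have := List.mem_takeWhile_imp (hl1 ▸ hx)
        simpa using this
      have : pathWeight (wtOf w) l = pathWeight (wtOf w) (l1 ++ l2) := by rw [hsplit]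
      rw [this, pathWeight_append hl1e hl2ne, hw1]
      have := wtOf_le_one w (l1.getLast hl1e) (l2.head hl2ne)
      omega
  · -- 1 + maxW (i+1) n ≤ X n w
    obtain ⟨l', hl', hw'⟩ := maxW_mem (wtOf_le_one w) (a := i + 1) (b := n) (by omega)
    have hl'ne : l' ≠ [] := by
      intro h; rw [h] at hl'; exact (by simp [IsPath] at hl' : False)
    have hhead' : l'.head hl'ne = i + 1 := by
      have := hl'.2.1; rw [List.head?_eq_head hl'ne] at this; exact Option.some_injective _ this
    by_cases hA : a = 1
    · -- path 1 :: l'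
      have hpath : IsPath 1 n (1 :: l') := by
        refine ⟨List.isChain_cons.2 ⟨?_, hl'.1⟩, rfl, ?_⟩
        · intro y hy; rw [List.head?_eq_head hl'ne, hhead'] at hy; cases hy; omega
        · rw [List.getLast?_cons, hl'.2.2]; simp
      have hw : pathWeight (wtOf w) (1 :: l') = wtOf w 1 (l'.head hl'ne)
          + pathWeight (wtOf w) l' := pathWeight_cons ..
      have hle := le_maxW (wtOf_le_one w) ⟨_, hpath, rfl⟩
      rw [hhead'] at hw
      rw [hA] at hwa
      unfold X
      omega
    · -- path 1 :: a :: l'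
      have hpath : IsPath 1 n (1 :: a :: l') := by
        refine ⟨List.isChain_cons.2 ⟨?_, List.isChain_cons.2 ⟨?_, hl'.1⟩⟩, rfl, ?_⟩
        · intro y hy; simp at hy; omega
        · intro y hy; rw [List.head?_eq_head hl'ne, hhead'] at hy; cases hy; omega
        · rw [List.getLast?_cons, List.getLast?_cons, hl'.2.2]; simp
      have hw2 : pathWeight (wtOf w) (a :: l') = wtOf w a (l'.head hl'ne)
          + pathWeight (wtOf w) l' := pathWeight_cons ..
      have hw1 : pathWeight (wtOf w) (1 :: a :: l') = wtOf w 1 a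
          + pathWeight (wtOf w) (a :: l') := pathWeight_cons (h := by simp) ..
      have hle := le_maxW (wtOf_le_one w) ⟨_, hpath, rfl⟩
      rw [hhead'] at hw2
      unfold X
      omega

end Aux

namespace Aux

def shiftW {n i : ℕ} (w : Omega n) : Omega (n - i) := fun e =>
  w ⟨(⟨e.1.1.1 + i, by have h1 := e.1.1.2; omega⟩,
      ⟨e.1.2.1 + i, by have h1 := e.1.2.2; omega⟩), by
    have := e.2; simp only [] at this ⊢; omega⟩

lemma wtOf_shiftW {n i : ℕ} (hi : i < n) (w : Omega n) {a b : ℕ}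
    (h : 1 ≤ a ∧ a < b ∧ b ≤ n - i) :
    wtOf (shiftW (i := i) w) a b = wtOf w (a + i) (b + i) := by
  rw [wtOf_eq _ h, wtOf_eq w (by omega)]
  have h2 : shiftW (i := i) w ⟨(⟨a - 1, by omega⟩, ⟨b - 1, by omega⟩), by
        show a - 1 < b - 1; omega⟩
      = w ⟨(⟨a + i - 1, by omega⟩, ⟨b + i - 1, by omega⟩), by
        show a + i - 1 < b + i - 1; omega⟩ := by
    show w _ = w _
    congr 1
    apply Subtype.ext
    apply Prod.ext <;> apply Fin.ext <;> simp [shiftW] <;> omega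
  rw [h2]

lemma map_sub_path {n i : ℕ} (hi : i < n) (w : Omega n) :
    ∀ l : List ℕ, l.Chain' (· < ·) → (∀ x ∈ l, i + 1 ≤ x ∧ x ≤ n) →
      (l.map (· - i)).Chain' (· < ·) ∧
      pathWeight (wtOf (shiftW (i := i) w)) (l.map (· - i)) = pathWeight (wtOf w) l := by
  intro l
  induction l with
  | nil => intro _ _; exact ⟨List.isChain_nil, rfl⟩
  | cons a t ih =>
    intro hc hmem
    cases t with
    | nil => exact ⟨List.isChain_singleton _, rfl⟩
    | cons b s =>
      have hab : a < b := (List.isChain_cons_cons.1 hc).1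
      have hct : (b :: s).Chain' (· < ·) := (List.isChain_cons_cons.1 hc).2
      have hmt : ∀ x ∈ b :: s, i + 1 ≤ x ∧ x ≤ n :=
        fun x hx => hmem x (List.mem_cons_of_mem _ hx)
      obtain ⟨ihc, ihw⟩ := ih hct hmt
      have hba := hmem a (by simp)
      have hbb := hmem b (by simp)
      constructor
      · rw [List.map_cons, List.map_cons]
        rw [List.map_cons] at ihc
        exact List.isChain_cons_cons.2 ⟨by omega, ihc⟩
      · rw [List.map_cons, List.map_cons, pathWeight_cons_cons, pathWeight_cons_cons,
          ← List.map_cons (f := (· - i)) (a := b) (l := s)]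
        rw [ihw]
        have : wtOf (shiftW (i := i) w) (a - i) (b - i) = wtOf w (a - i + i) (b - i + i) :=
          wtOf_shiftW hi w (by omega)
        rw [this, show a - i + i = a by omega, show b - i + i = b by omega]

lemma map_add_path {n i : ℕ} (hi : i < n) (w : Omega n) :
    ∀ l : List ℕ, l.Chain' (· < ·) → (∀ x ∈ l, 1 ≤ x ∧ x ≤ n - i) →
      (l.map (· + i)).Chain' (· < ·) ∧
      pathWeight (wtOf w) (l.map (· + i)) = pathWeight (wtOf (shiftW (i := i) w)) l := by
  intro l
  induction l with
  | nil => intro _ _; exact ⟨List.isChain_nil, rfl⟩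
  | cons a t ih =>
    intro hc hmem
    cases t with
    | nil => exact ⟨List.isChain_singleton _, rfl⟩
    | cons b s =>
      have hab : a < b := (List.isChain_cons_cons.1 hc).1
      have hct : (b :: s).Chain' (· < ·) := (List.isChain_cons_cons.1 hc).2
      have hmt : ∀ x ∈ b :: s, 1 ≤ x ∧ x ≤ n - i :=
        fun x hx => hmem x (List.mem_cons_of_mem _ hx)
      obtain ⟨ihc, ihw⟩ := ih hct hmt
      have hba := hmem a (by simp)
      have hbb := hmem b (by simp)
      constructor
      · rw [List.map_cons, List.map_cons]
        rw [List.map_cons] at ihc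
        exact List.isChain_cons_cons.2 ⟨by omega, ihc⟩
      · rw [List.map_cons, List.map_cons, pathWeight_cons_cons, pathWeight_cons_cons,
          ← List.map_cons (f := (· + i)) (a := b) (l := s)]
        rw [ihw]
        rw [wtOf_shiftW hi w (by omega)]

lemma maxW_shift {n i : ℕ} (hi : i < n) (w : Omega n) :
    maxW (wtOf w) (i + 1) n = maxW (wtOf (shiftW (i := i) w)) 1 (n - i) := by
  apply Nat.le_antisymm
  · refine maxW_le (by omega) ?_
    intro l hl
    have hmem := isPath_mem_bounds hl
    obtain ⟨hc, hw⟩ := map_sub_path hi w l hl.1 hmem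
    have hpath : IsPath 1 (n - i) (l.map (· - i)) := by
      refine ⟨hc, ?_, ?_⟩
      · rw [List.head?_map, hl.2.1]; simp
      · rw [List.getLast?_map, hl.2.2]; simp
    rw [← hw]
    exact le_maxW (wtOf_le_one _) ⟨_, hpath, rfl⟩
  · refine maxW_le (by omega) ?_
    intro l hl
    have hmem := isPath_mem_bounds hl
    obtain ⟨hc, hw⟩ := map_add_path hi w l hl.1 hmem
    have hpath : IsPath (i + 1) n (l.map (· + i)) := by
      refine ⟨hc, ?_, ?_⟩
      · rw [List.head?_map, hl.2.1]; simp [Nat.add_comm]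
      · rw [List.getLast?_map, hl.2.2]; simp; omega
    rw [← hw]
    exact le_maxW (wtOf_le_one _) ⟨_, hpath, rfl⟩

/-- Combined key lemma. -/
lemma X_split_shift {n i : ℕ} (hi : 1 ≤ i) (hin : i < n) {w : Omega n}
    (h0 : ∀ e : Edge n, (e.1.2 : ℕ) < i → w e = false)
    (h1 : ∃ e : Edge n, (e.1.2 : ℕ) = i ∧ w e = true) :
    X n w = 1 + X (n - i) (shiftW (i := i) w) := by
  rw [X_split hi hin h0 h1, maxW_shift hin w]
  rfl

end Aux

namespace Aux
def cc (p : ℝ) (t : Bool) : ℝ := if t then p else 1 - p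
lemma sum_cc (p : ℝ) : ∑ t : Bool, cc p t = 1 := by simp [cc]
lemma sum_prob_total (p : ℝ) {β : Type} [Fintype β] [DecidableEq β] :
    ∑ u : β → Bool, ∏ b, cc p (u b) = 1 := by
  classical
  rw [← Fintype.prod_sum (fun (_ : β) (t : Bool) => cc p t)]
  exact Finset.prod_eq_one (fun b _ => sum_cc p)
lemma sum_split {β : Type} [Fintype β] [DecidableEq β] {M : Type*} [CommRing M] (φ : ℝ →+* M) (p : ℝ)
    (q : β → Prop) [DecidablePred q] (F : (β → Bool) → M) :
    ∑ u : β → Bool, φ (∏ b, cc p (u b)) * F u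
      = ∑ x : {b // q b} → Bool, ∑ y : {b // ¬ q b} → Bool,
          φ (∏ s, cc p (x s)) * φ (∏ s, cc p (y s)) *
            F (fun b => if h : q b then x ⟨b, h⟩ else y ⟨b, h⟩) := by
  classical
  rw [← Equiv.sum_comp (Equiv.piEquivPiSubtypeProd q (fun _ => Bool)).symm
    (fun u => φ (∏ b, cc p (u b)) * F u), Fintype.sum_prod_type]
  refine Finset.sum_congr rfl (fun x _ => Finset.sum_congr rfl (fun y _ => ?_))
  have hm : (Equiv.piEquivPiSubtypeProd q (fun _ => Bool)).symm (x, y)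
      = fun b => if h : q b then x ⟨b, h⟩ else y ⟨b, h⟩ := by
    funext b
    simp [Equiv.piEquivPiSubtypeProd_symm_apply]
  rw [hm]
  congr 1
  rw [← map_mul]
  congr 1
  rw [← Fintype.prod_subtype_mul_prod_subtype q (fun b => cc p (if h : q b then x ⟨b, h⟩ else y ⟨b, h⟩))]
  congr 1
  · exact Finset.prod_congr rfl (fun s _ => by rw [dif_pos s.2])
  · exact Finset.prod_congr rfl (fun s _ => by rw [dif_neg s.2])

lemma sum_allfalse (p : ℝ) {β : Type} [Fintype β] [DecidableEq β] (q : β → Prop) [DecidablePred q] :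
    ∑ u : β → Bool, (if (∀ b, q b → u b = false) then ∏ b, cc p (u b) else 0)
      = (1 - p) ^ (Fintype.card {b // q b}) := by
  classical
  have key := sum_split (M := ℝ) (RingHom.id ℝ) p q
      (F := fun u => if (∀ b, q b → u b = false) then (1:ℝ) else 0)
  have lhs_eq : ∑ u : β → Bool, (if (∀ b, q b → u b = false) then ∏ b, cc p (u b) else 0)
      = ∑ u : β → Bool, (RingHom.id ℝ) (∏ b, cc p (u b)) *
          (if (∀ b, q b → u b = false) then (1:ℝ) else 0) :=
    Finset.sum_congr rfl (fun u _ => by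
      by_cases h : (∀ b, q b → u b = false) <;> simp [h])
  rw [lhs_eq, key]
  have step : ∀ x : {b // q b} → Bool, (∑ y : {b // ¬ q b} → Bool,
      (RingHom.id ℝ) (∏ s, cc p (x s)) * (RingHom.id ℝ) (∏ s, cc p (y s)) *
        (if (∀ b, q b → (if h : q b then x ⟨b, h⟩ else y ⟨b, h⟩) = false) then (1:ℝ) else 0))
      = (if x = (fun _ => false) then (1:ℝ) else 0) * ∏ s, cc p (x s) := by
    intro x
    have h2 : ∀ y : {b // ¬ q b} → Bool,
        (if (∀ b, q b → (if h : q b then x ⟨b, h⟩ else y ⟨b, h⟩) = false) then (1:ℝ) else 0)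
        = if x = (fun _ => false) then (1:ℝ) else 0 := by
      intro y
      congr 1
      apply propext
      constructor
      · intro h
        funext s
        have := h s.1 s.2
        rwa [dif_pos s.2] at this
      · intro h b hb
        rw [dif_pos hb, h]
    calc (∑ y : {b // ¬ q b} → Bool,
        (RingHom.id ℝ) (∏ s, cc p (x s)) * (RingHom.id ℝ) (∏ s, cc p (y s)) *
          (if (∀ b, q b → (if h : q b then x ⟨b, h⟩ else y ⟨b, h⟩) = false) then (1:ℝ) else 0))
        = ∑ y : {b // ¬ q b} → Bool,
            ((if x = (fun _ => false) then (1:ℝ) else 0) * ∏ s, cc p (x s)) * ∏ s, cc p (y s) :=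
          Finset.sum_congr rfl (fun y _ => by rw [h2 y]; simp only [RingHom.id_apply]; ring)
      _ = ((if x = (fun _ => false) then (1:ℝ) else 0) * ∏ s, cc p (x s)) *
            ∑ y : {b // ¬ q b} → Bool, ∏ s, cc p (y s) := (Finset.mul_sum _ _ _).symm
      _ = ((if x = (fun _ => false) then (1:ℝ) else 0) * ∏ s, cc p (x s)) * 1 := by
          rw [sum_prob_total p]
      _ = (if x = (fun _ => false) then (1:ℝ) else 0) * ∏ s, cc p (x s) := mul_one _
  rw [Finset.sum_congr rfl (fun x _ => step x)]
  rw [Finset.sum_eq_single (fun _ => false)]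
  · rw [if_pos rfl, one_mul]
    have : (∏ s : {b // q b}, cc p ((fun _ => false) s)) = ∏ _s : {b // q b}, (1 - p) :=
      Finset.prod_congr rfl (fun s _ => by simp [cc])
    rw [this, Finset.prod_const, Finset.card_univ]
  · intro x _ hx
    rw [if_neg hx, zero_mul]
  · intro h
    exact absurd (Finset.mem_univ _) h
end Aux

namespace Aux

lemma prob_eq (p : ℝ) {n : ℕ} (w : Omega n) : prob p w = ∏ e : Edge n, cc p (w e) := rfl

/-- cardinality of the edge set -/
lemma card_edge (k : ℕ) : Fintype.card (Edge k) = k.choose 2 := by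
  have e : Edge k ≃ Σ j : Fin k, Fin (j : ℕ) := {
    toFun := fun e => ⟨e.1.2, ⟨e.1.1, e.2⟩⟩
    invFun := fun s => ⟨(⟨s.2.1, lt_trans s.2.2 s.1.2⟩, s.1), s.2.2⟩
    left_inv := fun e => rfl
    right_inv := fun s => rfl }
  rw [Fintype.card_congr e, Fintype.card_sigma]
  simp only [Fintype.card_fin]
  rw [Fin.sum_univ_eq_sum_range (fun i => i) k]
  have h2 := Finset.sum_range_id_mul_two k
  have h3 := Nat.choose_two_right k
  omega

def edgeLowEquiv {n k : ℕ} (hk : k ≤ n) : Edge k ≃ {e : Edge n // (e.1.2 : ℕ) < k} where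
  toFun e := ⟨⟨(Fin.castLE hk e.1.1, Fin.castLE hk e.1.2), e.2⟩, e.1.2.2⟩
  invFun s := ⟨(⟨s.1.1.1.1, lt_trans s.1.2 s.2⟩, ⟨s.1.1.2.1, s.2⟩), s.1.2⟩
  left_inv e := by
    apply Subtype.ext; apply Prod.ext <;> apply Fin.ext <;> rfl
  right_inv s := by
    apply Subtype.ext; apply Subtype.ext; apply Prod.ext <;> apply Fin.ext <;> rfl

lemma card_low {n k : ℕ} (hk : k ≤ n) :
    Fintype.card {e : Edge n // (e.1.2 : ℕ) < k} = k.choose 2 := by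
  rw [← Fintype.card_congr (edgeLowEquiv hk), card_edge]

def edgeHighEquiv (n i : ℕ) : Edge (n - i) ≃ {e : Edge n // i ≤ (e.1.1 : ℕ)} where
  toFun e := ⟨⟨(⟨e.1.1.1 + i, by have := e.1.1.2; omega⟩, ⟨e.1.2.1 + i, by have := e.1.2.2; omega⟩),
      by have := e.2; simpa using this⟩, by simp⟩
  invFun s := ⟨(⟨s.1.1.1.1 - i, by have h1 := s.1.1.2.2; have h2 := s.1.2; have h3 := s.2; omega⟩,
      ⟨s.1.1.2.1 - i, by have h1 := s.1.1.2.2; have h2 := s.1.2; have h3 := s.2; omega⟩),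
      by have h2 := s.1.2; have h3 := s.2; simp at h2 h3 ⊢; omega⟩
  left_inv e := by
    apply Subtype.ext; apply Prod.ext <;> apply Fin.ext <;> simp
  right_inv s := by
    have h2 := s.1.2; have h3 := s.2
    apply Subtype.ext; apply Subtype.ext; apply Prod.ext <;> apply Fin.ext <;> simp <;> omega

def colSet {n : ℕ} (w : Omega n) : Finset ℕ :=
  (Finset.univ.filter (fun e : Edge n => w e = true)).image (fun e : Edge n => (e.1.2 : ℕ))

lemma mem_colSet_iff {n : ℕ} (w : Omega n) (m : ℕ) :
    m ∈ colSet w ↔ ∃ e : Edge n, w e = true ∧ (e.1.2 : ℕ) = m := by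
  simp [colSet, Finset.mem_image, Finset.mem_filter]

lemma colSet_ne {n : ℕ} {w : Omega n} (h : ∃ e : Edge n, w e = true) :
    (colSet w).Nonempty := by
  obtain ⟨e, he⟩ := h
  exact ⟨_, (mem_colSet_iff w _).2 ⟨e, he, rfl⟩⟩

/-- the first-true-column classifier -/
def cls {n : ℕ} (w : Omega n) : ℕ :=
  if h : ∃ e : Edge n, w e = true then (colSet w).min' (colSet_ne h) else n

/-- the event `T = i` -/
def Ev (n i : ℕ) (w : Omega n) : Prop :=
  (∀ e : Edge n, (e.1.2 : ℕ) < i → w e = false) ∧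
    (∃ e : Edge n, (e.1.2 : ℕ) = i ∧ w e = true)

instance {n i : ℕ} : DecidablePred (Ev n i) := fun w => by unfold Ev; infer_instance

lemma cls_mem {n : ℕ} (hn : 1 ≤ n) (w : Omega n) : cls w ∈ Finset.Icc 1 n := by
  unfold cls
  split
  · rename_i h
    have hmem := Finset.min'_mem (colSet w) (colSet_ne h)
    rw [mem_colSet_iff] at hmem
    obtain ⟨e, _, hv⟩ := hmem
    have h1 := e.2
    have h2 := e.1.2.2
    simp only [Finset.mem_Icc]
    omega
  · simp only [Finset.mem_Icc]; omega

lemma cls_eq_iff {n i : ℕ} (hi1 : 1 ≤ i) (hi2 : i < n) (w : Omega n) :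
    cls w = i ↔ Ev n i w := by
  unfold cls
  split
  · rename_i h
    constructor
    · intro hcls
      constructor
      · intro e hv
        by_contra hcon
        have hwe : w e = true := by
          cases hw : w e
          · exact absurd hw hcon
          · rfl
        have hmem : (e.1.2 : ℕ) ∈ colSet w := (mem_colSet_iff w _).2 ⟨e, hwe, rfl⟩
        have := Finset.min'_le (colSet w) _ hmem
        omega
      · have := Finset.min'_mem (colSet w) (colSet_ne h)
        rw [hcls, mem_colSet_iff] at this
        obtain ⟨e, he, hv⟩ := this
        exact ⟨e, hv, he⟩
    · rintro ⟨h0, h1⟩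
      obtain ⟨e, hv, he⟩ := h1
      apply le_antisymm
      · exact hv ▸ Finset.min'_le (colSet w) _ ((mem_colSet_iff w _).2 ⟨e, he, rfl⟩)
      · apply Finset.le_min'
        intro m hm
        obtain ⟨e', he', hv'⟩ := (mem_colSet_iff w _).1 hm
        by_contra hcon
        have : w e' = false := h0 e' (by omega)
        rw [this] at he'
        exact absurd he' (by simp)
  · rename_i h
    constructor
    · intro hcls; omega
    · rintro ⟨h0, h1⟩
      obtain ⟨e, _, he⟩ := h1
      exact absurd ⟨e, he⟩ h

lemma cls_eq_n_iff {n : ℕ} (hn : 1 ≤ n) (w : Omega n) :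
    cls w = n ↔ w = (fun _ => false) := by
  unfold cls
  split
  · rename_i h
    constructor
    · intro hcls
      have := Finset.min'_mem (colSet w) (colSet_ne h)
      rw [hcls, mem_colSet_iff] at this
      obtain ⟨e, _, hv⟩ := this
      have := e.1.2.2
      omega
    · intro hw
      obtain ⟨e, he⟩ := h
      rw [hw] at he
      exact absurd he (by simp)
  · rename_i h
    constructor
    · intro _
      funext e
      cases hw : w e
      · rfl
      · exact absurd ⟨e, hw⟩ h
    · intro _; rfl

lemma prob_false (p : ℝ) {n : ℕ} : prob p (fun _ : Edge n => false) = (1 - p) ^ (n.choose 2) := by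
  unfold prob
  rw [Finset.prod_congr rfl (fun e _ => if_neg (by simp))]
  rw [Finset.prod_const, Finset.card_univ, card_edge]

lemma fiber_top (p : ℝ) {n : ℕ} (hn : 1 ≤ n) :
    ∑ w ∈ Finset.univ.filter (fun w : Omega n => cls w = n),
        Polynomial.C (prob p w) * Polynomial.X ^ (X n w)
      = Polynomial.C ((1 - p) ^ (n.choose 2)) := by
  have hfil : Finset.univ.filter (fun w : Omega n => cls w = n) = {fun _ => false} := by
    ext w
    simp only [Finset.mem_filter, Finset.mem_univ, true_and, Finset.mem_singleton]
    exact cls_eq_n_iff hn w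
  rw [hfil, Finset.sum_singleton, X_of_false n hn, pow_zero, mul_one, prob_false]

end Aux

namespace Aux

lemma Ev_merge {n i : ℕ} (hi1 : 1 ≤ i)
    (x : {e : Edge n // i ≤ (e.1.1 : ℕ)} → Bool) (y : {e : Edge n // ¬ i ≤ (e.1.1 : ℕ)} → Bool) :
    Ev n i (fun e => if h : i ≤ (e.1.1 : ℕ) then x ⟨e, h⟩ else y ⟨e, h⟩) ↔
      ((∀ s : {e : Edge n // ¬ i ≤ (e.1.1 : ℕ)}, (s.1.1.2 : ℕ) < i → y s = false) ∧
       (∃ s : {e : Edge n // ¬ i ≤ (e.1.1 : ℕ)}, (s.1.1.2 : ℕ) = i ∧ y s = true)) := by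
  constructor
  · rintro ⟨h0, h1⟩
    constructor
    · intro s hs
      have hthis := h0 s.1 hs
      dsimp only at hthis
      rw [dif_neg s.2] at hthis
      exact hthis
    · obtain ⟨e, hv, he⟩ := h1
      have hne : ¬ i ≤ (e.1.1 : ℕ) := by have := e.2; omega
      dsimp only at he
      rw [dif_neg hne] at he
      exact ⟨⟨e, hne⟩, hv, he⟩
  · rintro ⟨h0, h1⟩
    constructor
    · intro e hv
      have hne : ¬ i ≤ (e.1.1 : ℕ) := by have := e.2; omega
      dsimp only
      rw [dif_neg hne]
      exact h0 ⟨e, hne⟩ hv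
    · obtain ⟨s, hv, hy⟩ := h1
      refine ⟨s.1, hv, ?_⟩
      dsimp only
      rw [dif_neg s.2]
      exact hy

lemma shiftW_merge {n i : ℕ}
    (x : {e : Edge n // i ≤ (e.1.1 : ℕ)} → Bool) (y : {e : Edge n // ¬ i ≤ (e.1.1 : ℕ)} → Bool) :
    shiftW (i := i) (n := n) (fun e => if h : i ≤ (e.1.1 : ℕ) then x ⟨e, h⟩ else y ⟨e, h⟩)
      = fun e' => x (edgeHighEquiv n i e') := by
  funext e'
  show (if h : i ≤ _ then _ else _) = _
  rw [dif_pos (by simp : i ≤ ((⟨(e'.1.1.1 : ℕ) + i, by have := e'.1.1.2; omega⟩ : Fin n) : ℕ))]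
  congr 1 <;>
    (apply Subtype.ext; apply Subtype.ext; apply Prod.ext <;> apply Fin.ext <;> simp [edgeHighEquiv])

lemma sum_B (p : ℝ) {n i : ℕ} :
    (∑ x : {e : Edge n // i ≤ (e.1.1 : ℕ)} → Bool,
      Polynomial.C (∏ s, cc p (x s)) *
        (Polynomial.X * Polynomial.X ^ (X (n - i) (fun e' => x (edgeHighEquiv n i e')))))
    = Polynomial.X * Zpoly p (n - i) := by
  have hcomp : ∀ z : Omega (n - i),
      Polynomial.C (prob p z) * (Polynomial.X * Polynomial.X ^ (X (n - i) z))
      = (fun x : {e : Edge n // i ≤ (e.1.1 : ℕ)} → Bool =>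
          Polynomial.C (∏ s, cc p (x s)) *
            (Polynomial.X * Polynomial.X ^ (X (n - i) (fun e' => x (edgeHighEquiv n i e')))))
          ((Equiv.arrowCongr (edgeHighEquiv n i) (Equiv.refl Bool)) z) := by
    intro z
    dsimp only
    have hz : (fun e' => ((Equiv.arrowCongr (edgeHighEquiv n i) (Equiv.refl Bool)) z)
        ((edgeHighEquiv n i) e')) = z := by
      funext e'; simp
    have hprod : (∏ s, cc p (((Equiv.arrowCongr (edgeHighEquiv n i) (Equiv.refl Bool)) z) s))
        = prob p z := by
      rw [prob_eq, ← Equiv.prod_comp (edgeHighEquiv n i).symm (fun e' : Edge (n - i) => cc p (z e'))]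
      exact Finset.prod_congr rfl (fun s _ => by simp)
    rw [hz, hprod]
  have hsum := Fintype.sum_equiv (Equiv.arrowCongr (edgeHighEquiv n i) (Equiv.refl Bool))
      (fun z : Omega (n - i) =>
        Polynomial.C (prob p z) * (Polynomial.X * Polynomial.X ^ (X (n - i) z)))
      (fun x : {e : Edge n // i ≤ (e.1.1 : ℕ)} → Bool =>
        Polynomial.C (∏ s, cc p (x s)) *
          (Polynomial.X * Polynomial.X ^ (X (n - i) (fun e' => x (edgeHighEquiv n i e')))))
      hcomp
  rw [← hsum, Zpoly, Finset.mul_sum]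
  exact Finset.sum_congr rfl (fun z _ => by ring)

lemma card_R_lt {n i : ℕ} (hin : i ≤ n) :
    Fintype.card {s : {e : Edge n // ¬ i ≤ (e.1.1 : ℕ)} // (s.1.1.2 : ℕ) < i} = i.choose 2 := by
  rw [← card_low hin]
  apply Fintype.card_congr
  exact Equiv.subtypeSubtypeEquivSubtype (p := fun e : Edge n => ¬ i ≤ (e.1.1 : ℕ))
    (q := fun e : Edge n => (e.1.2 : ℕ) < i) (fun {e} he => by have := e.2; omega)

lemma card_R_le {n i : ℕ} (hin : i < n) :
    Fintype.card {s : {e : Edge n // ¬ i ≤ (e.1.1 : ℕ)} // (s.1.1.2 : ℕ) ≤ i} = (i + 1).choose 2 := by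
  rw [← card_low (show i + 1 ≤ n by omega)]
  apply Fintype.card_congr
  refine (Equiv.subtypeSubtypeEquivSubtype (p := fun e : Edge n => ¬ i ≤ (e.1.1 : ℕ))
      (q := fun e : Edge n => (e.1.2 : ℕ) ≤ i) ?_).trans (Equiv.subtypeEquivRight ?_)
  · intro e he; have := e.2; omega
  · intro e; omega

lemma sum_A (p : ℝ) {n i : ℕ} (hi1 : 1 ≤ i) (hin : i < n) :
    (∑ y : {e : Edge n // ¬ i ≤ (e.1.1 : ℕ)} → Bool,
      (if ((∀ s : {e : Edge n // ¬ i ≤ (e.1.1 : ℕ)}, (s.1.1.2 : ℕ) < i → y s = false) ∧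
           (∃ s : {e : Edge n // ¬ i ≤ (e.1.1 : ℕ)}, (s.1.1.2 : ℕ) = i ∧ y s = true))
        then Polynomial.C (∏ s, cc p (y s)) else 0))
    = Polynomial.C ((1 - p) ^ (i.choose 2) - (1 - p) ^ ((i + 1).choose 2)) := by
  have h1 : ∀ y : {e : Edge n // ¬ i ≤ (e.1.1 : ℕ)} → Bool,
      (if ((∀ s : {e : Edge n // ¬ i ≤ (e.1.1 : ℕ)}, (s.1.1.2 : ℕ) < i → y s = false) ∧
           (∃ s : {e : Edge n // ¬ i ≤ (e.1.1 : ℕ)}, (s.1.1.2 : ℕ) = i ∧ y s = true))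
        then Polynomial.C (∏ s, cc p (y s)) else 0)
      = Polynomial.C (if ((∀ s : {e : Edge n // ¬ i ≤ (e.1.1 : ℕ)}, (s.1.1.2 : ℕ) < i → y s = false) ∧
           (∃ s : {e : Edge n // ¬ i ≤ (e.1.1 : ℕ)}, (s.1.1.2 : ℕ) = i ∧ y s = true))
        then (∏ s, cc p (y s)) else 0) := by
    intro y; split <;> simp
  rw [Finset.sum_congr rfl (fun y _ => h1 y), ← map_sum]
  refine congrArg Polynomial.C ?_
  have h2 : ∀ y : {e : Edge n // ¬ i ≤ (e.1.1 : ℕ)} → Bool,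
      (if ((∀ s : {e : Edge n // ¬ i ≤ (e.1.1 : ℕ)}, (s.1.1.2 : ℕ) < i → y s = false) ∧
           (∃ s : {e : Edge n // ¬ i ≤ (e.1.1 : ℕ)}, (s.1.1.2 : ℕ) = i ∧ y s = true))
        then (∏ s, cc p (y s)) else 0)
      = (if (∀ s : {e : Edge n // ¬ i ≤ (e.1.1 : ℕ)}, (s.1.1.2 : ℕ) < i → y s = false)
          then (∏ s, cc p (y s)) else 0)
        - (if (∀ s : {e : Edge n // ¬ i ≤ (e.1.1 : ℕ)}, (s.1.1.2 : ℕ) ≤ i → y s = false)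
          then (∏ s, cc p (y s)) else 0) := by
    intro y
    by_cases hP0 : (∀ s : {e : Edge n // ¬ i ≤ (e.1.1 : ℕ)}, (s.1.1.2 : ℕ) < i → y s = false)
    · by_cases hP1 : (∀ s : {e : Edge n // ¬ i ≤ (e.1.1 : ℕ)}, (s.1.1.2 : ℕ) ≤ i → y s = false)
      · rw [if_pos hP0, if_pos hP1, sub_self, if_neg]
        rintro ⟨-, s, hv, hy⟩
        rw [hP1 s (by omega)] at hy
        exact absurd hy (by simp)
      · rw [if_pos hP0, if_neg hP1, sub_zero, if_pos]
        refine ⟨hP0, ?_⟩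
        push_neg at hP1
        obtain ⟨s, hsv, hsy⟩ := hP1
        refine ⟨s, ?_, ?_⟩
        · by_contra hcon
          have hlt : (s.1.1.2 : ℕ) < i := by omega
          exact hsy (hP0 s hlt)
        · cases hy : y s
          · exact absurd hy hsy
          · rfl
    · by_cases hP1 : (∀ s : {e : Edge n // ¬ i ≤ (e.1.1 : ℕ)}, (s.1.1.2 : ℕ) ≤ i → y s = false)
      · exact absurd (fun s hs => hP1 s (by omega)) hP0
      · rw [if_neg hP0, if_neg hP1, sub_zero, if_neg]
        rintro ⟨h0, -⟩
        exact hP0 h0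
  rw [Finset.sum_congr rfl (fun y _ => h2 y), Finset.sum_sub_distrib]
  rw [sum_allfalse p (fun s : {e : Edge n // ¬ i ≤ (e.1.1 : ℕ)} => (s.1.1.2 : ℕ) < i),
    sum_allfalse p (fun s : {e : Edge n // ¬ i ≤ (e.1.1 : ℕ)} => (s.1.1.2 : ℕ) ≤ i)]
  rw [card_R_lt (by omega), card_R_le hin]

lemma fiber_mid (p : ℝ) {n i : ℕ} (hi1 : 1 ≤ i) (hin : i < n) :
    ∑ w ∈ Finset.univ.filter (fun w : Omega n => cls w = i),
        Polynomial.C (prob p w) * Polynomial.X ^ (X n w)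
      = Polynomial.C ((1 - p) ^ (i.choose 2) - (1 - p) ^ ((i + 1).choose 2)) *
          (Polynomial.X * Zpoly p (n - i)) := by
  have hfil : Finset.univ.filter (fun w : Omega n => cls w = i) = Finset.univ.filter (Ev n i) :=
    Finset.filter_congr (fun w _ => by rw [cls_eq_iff hi1 hin])
  rw [hfil, Finset.sum_filter]
  calc (∑ w : Omega n, if Ev n i w then Polynomial.C (prob p w) * Polynomial.X ^ (X n w) else 0)
      = ∑ w : Omega n, Polynomial.C (∏ e, cc p (w e)) *
          (fun w => if Ev n i w then Polynomial.X ^ (X n w) else 0) w := by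
        refine Finset.sum_congr rfl (fun w _ => ?_)
        dsimp only
        by_cases h : Ev n i w
        · rw [if_pos h, if_pos h, prob_eq]
        · rw [if_neg h, if_neg h, mul_zero]
    _ = ∑ x : {e : Edge n // i ≤ (e.1.1 : ℕ)} → Bool,
          ∑ y : {e : Edge n // ¬ i ≤ (e.1.1 : ℕ)} → Bool,
          Polynomial.C (∏ s, cc p (x s)) * Polynomial.C (∏ s, cc p (y s)) *
          (fun w => if Ev n i w then Polynomial.X ^ (X n w) else 0)
            (fun e => if h : i ≤ (e.1.1 : ℕ) then x ⟨e, h⟩ else y ⟨e, h⟩) :=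
        sum_split Polynomial.C p (fun e : Edge n => i ≤ (e.1.1 : ℕ)) _
    _ = ∑ x : {e : Edge n // i ≤ (e.1.1 : ℕ)} → Bool,
          ∑ y : {e : Edge n // ¬ i ≤ (e.1.1 : ℕ)} → Bool,
          (Polynomial.C (∏ s, cc p (x s)) *
            (Polynomial.X * Polynomial.X ^ (X (n - i) (fun e' => x (edgeHighEquiv n i e'))))) *
          (if ((∀ s : {e : Edge n // ¬ i ≤ (e.1.1 : ℕ)}, (s.1.1.2 : ℕ) < i → y s = false) ∧
               (∃ s : {e : Edge n // ¬ i ≤ (e.1.1 : ℕ)}, (s.1.1.2 : ℕ) = i ∧ y s = true))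
            then Polynomial.C (∏ s, cc p (y s)) else 0) := by
        refine Finset.sum_congr rfl (fun x _ => Finset.sum_congr rfl (fun y _ => ?_))
        dsimp only
        by_cases hE : ((∀ s : {e : Edge n // ¬ i ≤ (e.1.1 : ℕ)}, (s.1.1.2 : ℕ) < i → y s = false) ∧
               (∃ s : {e : Edge n // ¬ i ≤ (e.1.1 : ℕ)}, (s.1.1.2 : ℕ) = i ∧ y s = true))
        · have hEv := (Ev_merge hi1 x y).2 hE
          rw [if_pos hE, if_pos hEv]
          have hX := X_split_shift hi1 hin hEv.1 hEv.2
          rw [hX, shiftW_merge x y, pow_add, pow_one]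
          ring
        · rw [if_neg hE, if_neg (fun hEv => hE ((Ev_merge hi1 x y).1 hEv)), mul_zero, mul_zero]
    _ = (∑ x : {e : Edge n // i ≤ (e.1.1 : ℕ)} → Bool,
          Polynomial.C (∏ s, cc p (x s)) *
            (Polynomial.X * Polynomial.X ^ (X (n - i) (fun e' => x (edgeHighEquiv n i e'))))) *
        (∑ y : {e : Edge n // ¬ i ≤ (e.1.1 : ℕ)} → Bool,
          (if ((∀ s : {e : Edge n // ¬ i ≤ (e.1.1 : ℕ)}, (s.1.1.2 : ℕ) < i → y s = false) ∧
               (∃ s : {e : Edge n // ¬ i ≤ (e.1.1 : ℕ)}, (s.1.1.2 : ℕ) = i ∧ y s = true))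
            then Polynomial.C (∏ s, cc p (y s)) else 0)) :=
        (Finset.sum_mul_sum Finset.univ Finset.univ _ _).symm
    _ = Polynomial.C ((1 - p) ^ (i.choose 2) - (1 - p) ^ ((i + 1).choose 2)) *
          (Polynomial.X * Zpoly p (n - i)) := by
        rw [sum_B p, sum_A p hi1 hin, mul_comm]

end Aux

/-- recurrence for the probability generating function of `X_n`. -/
theorem stmt7 (p : ℝ) (hp : p ∈ Set.Ioo (0 : ℝ) 1) (n : ℕ) (hn : 1 ≤ n) :
    Zpoly p n =
      (∑ i ∈ Finset.Icc 1 (n - 1),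
        Polynomial.C ((1 - p) ^ (i.choose 2) - (1 - p) ^ ((i + 1).choose 2)) *
          Polynomial.X * Zpoly p (n - i)) +
        Polynomial.C ((1 - p) ^ (n.choose 2)) := by
  have hpart := Finset.sum_fiberwise_of_maps_to (g := Aux.cls)
      (fun (w : Omega n) (_ : w ∈ Finset.univ) => Aux.cls_mem hn w)
      (fun w => Polynomial.C (prob p w) * Polynomial.X ^ (X n w))
  have hIcc : Finset.Icc 1 n = insert n (Finset.Icc 1 (n - 1)) := by
    ext j; simp only [Finset.mem_Icc, Finset.mem_insert]; omega
  have hnotmem : n ∉ Finset.Icc 1 (n - 1) := by simp only [Finset.mem_Icc]; omega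
  calc Zpoly p n
      = ∑ w : Omega n, Polynomial.C (prob p w) * Polynomial.X ^ (X n w) := rfl
    _ = ∑ j ∈ Finset.Icc 1 n, ∑ w ∈ Finset.univ.filter (fun w : Omega n => Aux.cls w = j),
          Polynomial.C (prob p w) * Polynomial.X ^ (X n w) := hpart.symm
    _ = (∑ w ∈ Finset.univ.filter (fun w : Omega n => Aux.cls w = n),
          Polynomial.C (prob p w) * Polynomial.X ^ (X n w))
        + ∑ j ∈ Finset.Icc 1 (n - 1), ∑ w ∈ Finset.univ.filter (fun w : Omega n => Aux.cls w = j),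
          Polynomial.C (prob p w) * Polynomial.X ^ (X n w) := by
        rw [hIcc, Finset.sum_insert hnotmem]
    _ = (∑ i ∈ Finset.Icc 1 (n - 1),
        Polynomial.C ((1 - p) ^ (i.choose 2) - (1 - p) ^ ((i + 1).choose 2)) *
          Polynomial.X * Zpoly p (n - i)) +
        Polynomial.C ((1 - p) ^ (n.choose 2)) := by
        rw [Aux.fiber_top p hn, add_comm]
        congr 1
        refine Finset.sum_congr rfl (fun j hj => ?_)
        rw [Finset.mem_Icc] at hj
        rw [Aux.fiber_mid p hj.1 (by omega)]
        ring

end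
end

section
/- Let p ∈ (0,1) and let E[X_n] satisfy Σ_{n≥0}(1+E[X_n])x^n = 1 + x/((1-x)^2 B_p(x)). Then lim_{n→∞} E[X_n]/(n-1) = 1/B_p(1) = (Σ_{n≥1} (1-p)^{C(n,2)})^{-1}. -/
open Filter PowerSeries FormalMultilinearSeries Metric
open scoped ENNReal NNReal Topology

lemma choose_step (n : ℕ) : (n + 2).choose 2 = (n + 1).choose 2 + (n + 1) := by
  rw [Nat.choose_succ_succ (n+1) 1, Nat.choose_one_right, Nat.add_comm]

lemma le_choose2 (n : ℕ) : n ≤ (n + 1).choose 2 := by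
  cases n with
  | zero => simp
  | succ m => rw [choose_step]; omega

section Q
variable {q : ℝ} (hq0 : 0 < q) (hq1 : q < 1)

include hq0 hq1

lemma b_le_geom (n : ℕ) : q ^ ((n + 1).choose 2) ≤ q ^ n :=
  pow_le_pow_of_le_one hq0.le hq1.le (le_choose2 n)

lemma b_summable : Summable (fun n : ℕ => q ^ ((n + 1).choose 2)) :=
  Summable.of_nonneg_of_le (fun n => by positivity) (b_le_geom hq0 hq1)
    (summable_geometric_of_lt_one hq0.le hq1)

omit hq0 hq1 in
lemma b_succ (n : ℕ) : q ^ ((n + 2).choose 2) = q ^ ((n + 1).choose 2) * q ^ (n + 1) := by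
  rw [← pow_add, choose_step]

lemma b_antitone (n : ℕ) : q ^ ((n + 2).choose 2) ≤ q ^ ((n + 1).choose 2) := by
  rw [b_succ]
  nlinarith [pow_pos hq0 ((n+1).choose 2), pow_le_one₀ hq0.le hq1.le (n := n+1)]

lemma L_pos : 0 < ∑' n : ℕ, q ^ ((n + 1).choose 2) :=
  Summable.tsum_pos (b_summable hq0 hq1) (fun n => by positivity) 0 (by norm_num)

lemma pi_hasSum :
    HasSum (fun k : ℕ => q ^ ((k + 1).choose 2) - q ^ ((k + 2).choose 2)) 1 := by
  rw [hasSum_iff_tendsto_nat_of_nonneg (fun k => sub_nonneg.2 (b_antitone hq0 hq1 k))]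
  have h : ∀ n : ℕ, ∑ i ∈ Finset.range n,
      (q ^ ((i + 1).choose 2) - q ^ ((i + 2).choose 2)) = 1 - q ^ ((n + 1).choose 2) := by
    intro n
    have := Finset.sum_range_sub' (fun i : ℕ => q ^ ((i + 1).choose 2)) n
    simpa using this
  simp only [h]
  have hq' : Tendsto (fun n : ℕ => q ^ ((n + 1).choose 2)) atTop (nhds 0) := by
    apply squeeze_zero (fun n => by positivity) (b_le_geom hq0 hq1)
    exact tendsto_pow_atTop_nhds_zero_of_lt_one hq0.le hq1
  simpa using tendsto_const_nhds.sub hq'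

set_option maxHeartbeats 1000000 in
/-- The key analytic fact: the coefficients of `B⁻¹` decay geometrically and sum to
`(B(1))⁻¹`. -/
lemma key : ∃ ρ C : ℝ, 1 < ρ ∧ 0 < C ∧
    (∀ n, |PowerSeries.coeff n ((PowerSeries.mk fun m => q ^ ((m + 1).choose 2) : PowerSeries ℝ))⁻¹| ≤ C * ρ⁻¹ ^ n) ∧
    HasSum (fun n => PowerSeries.coeff n ((PowerSeries.mk fun m => q ^ ((m + 1).choose 2) : PowerSeries ℝ))⁻¹)
      (∑' n : ℕ, q ^ ((n + 1).choose 2))⁻¹ := by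
  classical
  set Bp : PowerSeries ℝ := PowerSeries.mk fun m => q ^ ((m + 1).choose 2) with hBp
  have hB0 : constantCoeff Bp = 1 := by
    simp [hBp, ← coeff_zero_eq_constantCoeff]
  have hmul : Bp⁻¹ * Bp = 1 := PowerSeries.inv_mul_cancel _ (by rw [hB0]; norm_num)
  set c : ℕ → ℝ := fun n => PowerSeries.coeff n Bp⁻¹ with hc
  have hconv : ∀ n, (∑ kl ∈ Finset.HasAntidiagonal.antidiagonal n, c kl.1 * q ^ ((kl.2 + 1).choose 2))
      = if n = 0 then 1 else 0 := by
    intro n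
    have h := congrArg (PowerSeries.coeff n) hmul
    rw [PowerSeries.coeff_mul] at h
    simpa [hBp, hc, PowerSeries.coeff_one] using h
  -- crude bound |c n| ≤ 2 ^ n
  have hc_bound : ∀ n, |c n| ≤ 2 ^ n := by
    intro n
    induction n using Nat.strong_induction_on with
    | _ n ih =>
      have h := hconv n
      rw [Finset.Nat.sum_antidiagonal_eq_sum_range_succ_mk, Finset.sum_range_succ] at h
      have hnn : (n - n + 1).choose 2 = 0 := by rw [Nat.sub_self]; rfl
      rw [hnn, pow_zero, mul_one] at h
      have hcn : c n = (if n = 0 then (1:ℝ) else 0)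
          - ∑ k ∈ Finset.range n, c k * q ^ ((n - k + 1).choose 2) := by linarith
      have h1 : |∑ k ∈ Finset.range n, c k * q ^ ((n - k + 1).choose 2)| ≤ 2 ^ n - 1 := by
        calc |∑ k ∈ Finset.range n, c k * q ^ ((n - k + 1).choose 2)|
            ≤ ∑ k ∈ Finset.range n, |c k * q ^ ((n - k + 1).choose 2)| :=
              Finset.abs_sum_le_sum_abs _ _
          _ ≤ ∑ k ∈ Finset.range n, (2:ℝ) ^ k := by
              apply Finset.sum_le_sum
              intro k hk
              rw [abs_mul, abs_of_nonneg (by positivity : (0:ℝ) ≤ q ^ ((n - k + 1).choose 2))]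
              have h2 : q ^ ((n - k + 1).choose 2) ≤ 1 := pow_le_one₀ hq0.le hq1.le
              have h3 := ih k (Finset.mem_range.1 hk)
              nlinarith [abs_nonneg (c k)]
          _ = 2 ^ n - 1 := by
              rw [geom_sum_eq (by norm_num : (2:ℝ) ≠ 1)]; ring
      rw [hcn]
      have h2 : |(if n = 0 then (1:ℝ) else 0)| ≤ 1 := by split_ifs <;> simp
      calc |(if n = 0 then (1:ℝ) else 0) - ∑ k ∈ Finset.range n, c k * q ^ ((n - k + 1).choose 2)|
          ≤ |(if n = 0 then (1:ℝ) else 0)| + |∑ k ∈ Finset.range n, c k * q ^ ((n - k + 1).choose 2)| := by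
            rw [sub_eq_add_neg]
            exact (abs_add_le _ _).trans (by rw [abs_neg])
        _ ≤ 1 + (2 ^ n - 1) := add_le_add h2 h1
        _ = 2 ^ n := by ring
  -- complex side
  set L : ℝ := ∑' n : ℕ, q ^ ((n + 1).choose 2) with hL
  set bc : ℕ → ℂ := fun n => (q : ℂ) ^ ((n + 1).choose 2) with hbc
  have hbc_real : ∀ n, bc n = ((q ^ ((n + 1).choose 2) : ℝ) : ℂ) := by
    intro n; push_cast [hbc]; ring
  set pb := FormalMultilinearSeries.ofScalars ℂ bc with hpb
  have hqC : (q : ℂ) ≠ 0 := by exact_mod_cast hq0.ne'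
  have hrad : pb.radius = ⊤ := by
    apply ofScalars_radius_eq_top_of_tendsto
    · exact Eventually.of_forall fun n => pow_ne_zero _ hqC
    · have heq : ∀ n : ℕ, ‖bc (n + 1)‖ / ‖bc n‖ = q ^ (n + 1) := by
        intro n
        rw [hbc_real, hbc_real, Complex.norm_real, Complex.norm_real,
          Real.norm_eq_abs, Real.norm_eq_abs, abs_of_nonneg (by positivity),
          abs_of_nonneg (by positivity), b_succ]
        field_simp
      simp only [heq]
      have := tendsto_pow_atTop_nhds_zero_of_lt_one hq0.le hq1
      exact (tendsto_add_atTop_iff_nat 1).2 (by simpa using this)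
  set Bc : ℂ → ℂ := pb.sum with hBcdef
  have hradpos : (0 : ℝ≥0∞) < pb.radius := by rw [hrad]; exact ENNReal.zero_lt_top
  have hBsum : ∀ z : ℂ, HasSum (fun n => bc n * z ^ n) (Bc z) := by
    intro z
    have h := pb.hasSum (x := z) (by rw [hrad]; exact edist_lt_top _ _)
    have hterm : ∀ n, (pb n fun _ => z) = bc n * z ^ n := fun n => by
      rw [hpb, FormalMultilinearSeries.ofScalars_apply_eq, smul_eq_mul]
    simpa only [hterm] using h
  have hball : HasFPowerSeriesOnBall Bc pb 0 pb.radius := pb.hasFPowerSeriesOnBall hradpos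
  have han : ∀ z : ℂ, AnalyticAt ℂ Bc z := fun z =>
    hball.analyticAt_of_mem (by rw [hrad]; exact edist_lt_top _ _)
  have hcont : Continuous Bc := continuous_iff_continuousAt.2 fun z => (han z).continuousAt
  have hB1 : Bc 1 = ((L : ℝ) : ℂ) := by
    have h1 := hBsum 1
    simp only [one_pow, mul_one] at h1
    have h2 : HasSum (fun n => ((q ^ ((n + 1).choose 2) : ℝ) : ℂ)) ((L : ℝ) : ℂ) :=
      Complex.hasSum_ofReal.2 (b_summable hq0 hq1).hasSum
    have h2' : HasSum bc ((L : ℝ) : ℂ) := by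
      convert h2 using 1; funext n; exact hbc_real n
    exact h1.unique h2'
  have hLpos : 0 < L := L_pos hq0 hq1
  -- zero-freeness on the closed unit disk
  have hz1 : ∀ z : ℂ, ‖z‖ ≤ 1 → Bc z ≠ 0 := by
    intro z hz
    rcases eq_or_ne z 1 with rfl | hne
    · rw [hB1]
      exact_mod_cast hLpos.ne'
    · have hzre : z.re < 1 := by
        by_contra hre
        push_neg at hre
        have h1 : z.re ≤ 1 := le_trans (Complex.re_le_norm z) hz
        have hreq : z.re = 1 := le_antisymm h1 hre
        have hsq : z.re ^ 2 + z.im ^ 2 ≤ 1 := by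
          have h2 := Complex.sq_norm z
          have h3 : ‖z‖ ≤ 1 := hz
          have h4 : ‖z‖ ^ 2 ≤ 1 := by nlinarith [norm_nonneg z]
          rw [h2, Complex.normSq_apply] at h4
          nlinarith
        have him : z.im = 0 := by nlinarith
        exact hne (Complex.ext hreq him)
      intro hBz0
      have h1 : HasSum (fun k : ℕ => bc k * z ^ (k + 1)) (z * Bc z) := by
        have h := (hBsum z).mul_left z
        have hterm : ∀ k : ℕ, z * (bc k * z ^ k) = bc k * z ^ (k + 1) := fun k => by ring
        simpa only [hterm] using h
      have h2 : HasSum (fun k : ℕ => bc (k + 1) * z ^ (k + 1)) (Bc z - 1) := by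
        apply (hasSum_nat_add_iff (f := fun k => bc k * z ^ k) 1).2
        have : Bc z - 1 + ∑ i ∈ Finset.range 1, bc i * z ^ i = Bc z := by
          simp [hbc]
        rw [this]
        exact hBsum z
      have h3 := h1.sub h2
      have h4 := Complex.hasSum_re h3
      have hterm : ∀ k : ℕ, (bc k * z ^ (k + 1) - bc (k + 1) * z ^ (k + 1)).re
          = (q ^ ((k + 1).choose 2) - q ^ ((k + 2).choose 2)) * (z ^ (k + 1)).re := by
        intro k
        have : bc k * z ^ (k + 1) - bc (k + 1) * z ^ (k + 1)
            = ((q ^ ((k + 1).choose 2) - q ^ ((k + 2).choose 2) : ℝ) : ℂ) * z ^ (k + 1) := by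
          rw [hbc_real, hbc_real]
          push_cast
          ring
        rw [this, Complex.re_ofReal_mul]
      simp only [hterm] at h4
      -- strict comparison
      have hle : ∀ k : ℕ, (q ^ ((k + 1).choose 2) - q ^ ((k + 2).choose 2)) * (z ^ (k + 1)).re
          ≤ q ^ ((k + 1).choose 2) - q ^ ((k + 2).choose 2) := by
        intro k
        have hπ : 0 ≤ q ^ ((k + 1).choose 2) - q ^ ((k + 2).choose 2) :=
          sub_nonneg.2 (b_antitone hq0 hq1 k)
        have hre : (z ^ (k + 1)).re ≤ 1 := by
          calc (z ^ (k + 1)).re ≤ ‖z ^ (k + 1)‖ := Complex.re_le_norm _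
            _ = ‖z‖ ^ (k + 1) := by rw [norm_pow]
            _ ≤ 1 := pow_le_one₀ (norm_nonneg z) hz
        exact mul_le_of_le_one_right hπ hre
      have hstrict : (q ^ ((0 + 1).choose 2) - q ^ ((0 + 2).choose 2)) * (z ^ (0 + 1)).re
          < q ^ ((0 + 1).choose 2) - q ^ ((0 + 2).choose 2) := by
        have hπ0 : (0:ℝ) < q ^ ((0 + 1).choose 2) - q ^ ((0 + 2).choose 2) := by
          norm_num
          linarith
        have : (z ^ (0 + 1)).re < 1 := by simpa using hzre
        nlinarith
      have hlt := hasSum_lt hle hstrict h4 (pi_hasSum hq0 hq1)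
      rw [hBz0] at hlt
      simp at hlt
  -- extend zero-freeness beyond the unit disk by compactness
  have hopen : IsOpen {z : ℂ | Bc z ≠ 0} := by
    have : {z : ℂ | Bc z ≠ 0} = Bc ⁻¹' ({0}ᶜ) := rfl
    rw [this]
    exact isOpen_compl_singleton.preimage hcont
  have hsub1 : Metric.closedBall (0:ℂ) 1 ⊆ {z : ℂ | Bc z ≠ 0} := fun z hz =>
    hz1 z (by simpa [Metric.mem_closedBall, dist_zero_right] using hz)
  obtain ⟨δ, hδ0, hδ⟩ := (isCompact_closedBall (0:ℂ) 1).exists_thickening_subset_open hopen hsub1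
  have hz2 : ∀ z : ℂ, ‖z‖ ≤ 1 + δ/2 → Bc z ≠ 0 := by
    intro z hz
    rcases le_or_gt ‖z‖ 1 with h | h
    · exact hz1 z h
    · apply hδ
      rw [Metric.mem_thickening_iff]
      refine ⟨(‖z‖⁻¹ : ℝ) • z, ?_, ?_⟩
      · rw [Metric.mem_closedBall, dist_zero_right, norm_smul]
        rw [norm_inv, norm_norm]
        rw [inv_mul_cancel₀ (by linarith : ‖z‖ ≠ 0)]
      · rw [dist_eq_norm]
        have heq : z - (‖z‖⁻¹ : ℝ) • z = ((1 - ‖z‖⁻¹ : ℝ)) • z := by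
          rw [sub_smul, one_smul]
        rw [heq, norm_smul, Real.norm_eq_abs, abs_of_nonneg
          (by rw [sub_nonneg]; exact inv_le_one_of_one_le₀ h.le)]
        have : (1 - ‖z‖⁻¹) * ‖z‖ = ‖z‖ - 1 := by
          have hz0 : ‖z‖ ≠ 0 := by linarith
          rw [sub_mul, one_mul, inv_mul_cancel₀ hz0]
        rw [this]
        linarith
  -- the inverse function
  set r : NNReal := ⟨1 + δ/2, by positivity⟩ with hr
  have hrR : (r : ℝ) = 1 + δ/2 := rfl
  set Fc : ℂ → ℂ := fun z => (Bc z)⁻¹ with hFc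
  have hdiff : DifferentiableOn ℂ Fc (Metric.closedBall 0 (r:ℝ)) := by
    intro z hz
    have hz' : ‖z‖ ≤ 1 + δ/2 := by
      rw [Metric.mem_closedBall, dist_zero_right, hrR] at hz
      exact hz
    exact ((han z).inv (hz2 z hz')).differentiableAt.differentiableWithinAt
  have hrpos : (0 : NNReal) < r := by
    rw [← NNReal.coe_lt_coe, hrR]
    positivity
  have hFball := hdiff.hasFPowerSeriesOnBall hrpos
  -- the formal inverse coefficients, as a complex power series
  set cc : ℕ → ℂ := fun n => ((c n : ℝ) : ℂ) with hcc
  set pc := FormalMultilinearSeries.ofScalars ℂ cc with hpc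
  have hpc_norm : ∀ n, ‖pc n‖ = |c n| := by
    intro n
    rw [hpc, FormalMultilinearSeries.ofScalars_norm, hcc, Complex.norm_real, Real.norm_eq_abs]
  have hrad4 : ((4⁻¹ : ℝ≥0) : ℝ≥0∞) ≤ pc.radius := by
    apply pc.le_radius_of_summable
    apply Summable.of_nonneg_of_le (f := fun n : ℕ => (1/2 : ℝ) ^ n)
      (fun n => by positivity) ?_
      (summable_geometric_of_lt_one (by norm_num) (by norm_num))
    · intro n
      rw [hpc_norm]
      calc |c n| * ((4⁻¹ : ℝ≥0) : ℝ) ^ n ≤ 2 ^ n * ((4⁻¹ : ℝ≥0) : ℝ) ^ n := by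
            have := hc_bound n
            gcongr
        _ = (1/2 : ℝ) ^ n := by
            rw [← mul_pow]
            norm_num
  have hpc_radpos : (0 : ℝ≥0∞) < pc.radius :=
    lt_of_lt_of_le (by norm_num) hrad4
  have hpcsum : ∀ z : ℂ, ‖z‖ < 4⁻¹ → HasSum (fun n => cc n * z ^ n) (pc.sum z) := by
    intro z hz
    have hmem : z ∈ Metric.eball (0 : ℂ) pc.radius := by
      rw [EMetric.mem_ball, edist_zero_right, enorm_eq_nnnorm]
      refine lt_of_lt_of_le ?_ hrad4
      rw [ENNReal.coe_lt_coe, ← NNReal.coe_lt_coe, coe_nnnorm]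
      simpa using hz
    have h := pc.hasSum hmem
    have hterm : ∀ n, (pc n fun _ => z) = cc n * z ^ n := fun n => by
      rw [hpc, FormalMultilinearSeries.ofScalars_apply_eq, smul_eq_mul]
    simpa only [hterm] using h
  have hprod : ∀ z : ℂ, ‖z‖ < 4⁻¹ → pc.sum z * Bc z = 1 := by
    intro z hz
    have half : Summable fun n : ℕ => (1/2 : ℝ) ^ n :=
      summable_geometric_of_lt_one (by norm_num) (by norm_num)
    have hsc : Summable fun n => ‖cc n * z ^ n‖ := by
      apply Summable.of_nonneg_of_le (fun n => norm_nonneg _) ?_ half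
      intro n
      rw [norm_mul, norm_pow, hcc, Complex.norm_real, Real.norm_eq_abs]
      calc |c n| * ‖z‖ ^ n ≤ 2 ^ n * (4⁻¹ : ℝ) ^ n :=
            mul_le_mul (hc_bound n) (pow_le_pow_left₀ (norm_nonneg z) hz.le n)
              (pow_nonneg (norm_nonneg z) n) (by positivity)
        _ = (1/2 : ℝ) ^ n := by rw [← mul_pow]; norm_num
    have hsb : Summable fun n => ‖bc n * z ^ n‖ := by
      apply Summable.of_nonneg_of_le (fun n => norm_nonneg _) ?_
        (summable_geometric_of_lt_one (by norm_num) (by norm_num) :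
          Summable fun n : ℕ => (4⁻¹ : ℝ) ^ n)
      intro n
      rw [hbc_real n, norm_mul, norm_pow, Complex.norm_real, Real.norm_eq_abs,
        abs_of_nonneg (by positivity : (0:ℝ) ≤ q ^ ((n+1).choose 2))]
      calc q ^ ((n+1).choose 2) * ‖z‖ ^ n ≤ 1 * (4⁻¹ : ℝ) ^ n :=
            mul_le_mul (pow_le_one₀ hq0.le hq1.le) (pow_le_pow_left₀ (norm_nonneg z) hz.le n)
              (pow_nonneg (norm_nonneg z) n) (by norm_num)
        _ = (4⁻¹ : ℝ) ^ n := one_mul _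
    have h1 := (hpcsum z hz).tsum_eq
    have h2 := (hBsum z).tsum_eq
    rw [← h1, ← h2, tsum_mul_tsum_eq_tsum_sum_antidiagonal_of_summable_norm hsc hsb]
    have hterm : ∀ n : ℕ, (∑ kl ∈ Finset.HasAntidiagonal.antidiagonal n,
        (cc kl.1 * z ^ kl.1) * (bc kl.2 * z ^ kl.2)) = (if n = 0 then (1:ℂ) else 0) * z ^ n := by
      intro n
      have hstep : ∀ kl ∈ Finset.HasAntidiagonal.antidiagonal n, (cc kl.1 * z ^ kl.1) * (bc kl.2 * z ^ kl.2)
          = (cc kl.1 * bc kl.2) * z ^ n := by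
        intro kl hkl
        have hkl' := Finset.HasAntidiagonal.mem_antidiagonal.1 hkl
        rw [← hkl', pow_add]
        ring
      rw [Finset.sum_congr rfl hstep, ← Finset.sum_mul]
      congr 1
      calc (∑ kl ∈ Finset.HasAntidiagonal.antidiagonal n, cc kl.1 * bc kl.2)
          = ((∑ kl ∈ Finset.HasAntidiagonal.antidiagonal n, c kl.1 * q ^ ((kl.2 + 1).choose 2) : ℝ) : ℂ) := by
            rw [Complex.ofReal_sum]
            apply Finset.sum_congr rfl
            intro kl _
            rw [hcc, hbc_real kl.2, ← Complex.ofReal_mul]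
        _ = (if n = 0 then (1:ℂ) else 0) := by
            rw [hconv n]
            split_ifs <;> simp
    rw [tsum_congr hterm, tsum_eq_single 0 (by intro n hn; simp [hn])]
    simp
  have hFeq : Fc =ᶠ[nhds (0:ℂ)] pc.sum := by
    filter_upwards [Metric.ball_mem_nhds (0:ℂ) (by norm_num : (0:ℝ) < 4⁻¹)] with z hz
    rw [Metric.mem_ball, dist_zero_right] at hz
    exact inv_eq_of_mul_eq_one_left (hprod z hz)
  have hFat : HasFPowerSeriesAt Fc pc 0 :=
    ((pc.hasFPowerSeriesOnBall hpc_radpos).hasFPowerSeriesAt).congr hFeq.symm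
  have hpcpF : pc = cauchyPowerSeries Fc 0 r :=
    hFat.eq_formalMultilinearSeries hFball.hasFPowerSeriesAt
  have hrle : (r : ℝ≥0∞) ≤ pc.radius := by rw [hpcpF]; exact hFball.r_le
  set ρ : NNReal := ⟨1 + δ/4, by positivity⟩ with hρdef
  have hρr : (ρ : ℝ≥0∞) < pc.radius := by
    refine lt_of_lt_of_le ?_ hrle
    rw [ENNReal.coe_lt_coe, ← NNReal.coe_lt_coe]
    show 1 + δ/4 < 1 + δ/2
    linarith
  obtain ⟨C, hC0, hCb⟩ := pc.norm_mul_pow_le_of_lt_radius hρr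
  have hρ1 : (1:ℝ) < 1 + δ/4 := by linarith
  have hfinal : ∀ n, |c n| ≤ C * ((1 + δ/4)⁻¹) ^ n := by
    intro n
    have h := hCb n
    rw [hpc_norm] at h
    have hpow : (0:ℝ) < (1 + δ/4) ^ n := by positivity
    have h' : |c n| ≤ C / (1 + δ/4) ^ n := (le_div_iff₀ hpow).2 h
    rwa [div_eq_mul_inv, ← inv_pow] at h'
  -- evaluation at 1
  have h1mem : (1:ℂ) ∈ Metric.eball (0:ℂ) (r : ℝ≥0∞) := by
    rw [EMetric.mem_ball, edist_zero_right, enorm_eq_nnnorm]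
    rw [ENNReal.coe_lt_coe, ← NNReal.coe_lt_coe, coe_nnnorm, norm_one, hrR]
    linarith
  have hsum1 := hFball.hasSum h1mem
  rw [← hpcpF, zero_add] at hsum1
  have hterm1 : ∀ n, (pc n fun _ => (1:ℂ)) = cc n := fun n => by
    rw [hpc, FormalMultilinearSeries.ofScalars_apply_eq, one_pow, smul_eq_mul, mul_one]
  simp only [hterm1] at hsum1
  have hF1 : Fc 1 = ((L⁻¹ : ℝ) : ℂ) := by
    show (Bc 1)⁻¹ = _
    rw [hB1, Complex.ofReal_inv]
  rw [hF1] at hsum1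
  have hreal : HasSum c L⁻¹ := Complex.hasSum_ofReal.1 hsum1
  exact ⟨1 + δ/4, C, hρ1, hC0, hfinal, hreal⟩





end Q

/-- `A_p(x) = Σ_{n≥0} (1-p)^{C(n,2)} x^n` as a formal power series over `ℝ`. -/
noncomputable def Aps (p : ℝ) : PowerSeries ℝ :=
  PowerSeries.mk fun n => (1 - p) ^ (n.choose 2)

/-- `B_p(x) = Σ_{n≥0} (1-p)^{C(n+1,2)} x^n` as a formal power series over `ℝ`. -/
noncomputable def Bps (p : ℝ) : PowerSeries ℝ :=
  PowerSeries.mk fun n => (1 - p) ^ ((n + 1).choose 2)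

/-- if `Σ (1+E[X_n]) x^n = 1 + x/((1-x)² B_p(x))`, then
`E[X_n]/(n-1) → 1/B_p(1) = (Σ_{n≥1} (1-p)^{C(n,2)})⁻¹`. -/
theorem stmt12 (p : ℝ) (hp : p ∈ Set.Ioo (0 : ℝ) 1) (f : ℕ → ℝ)
    (hf : PowerSeries.mk (fun n => 1 + f n) =
      1 + PowerSeries.X * ((1 - PowerSeries.X) ^ 2 * Bps p)⁻¹) :
    Tendsto (fun n : ℕ => f n / ((n : ℝ) - 1)) atTop
      (nhds (∑' m : ℕ, (1 - p) ^ ((m + 1).choose 2))⁻¹) := by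
  obtain ⟨hp0, hp1⟩ := hp
  set q : ℝ := 1 - p with hqdef
  have hq0 : 0 < q := by simp only [hqdef]; linarith
  have hq1 : q < 1 := by simp only [hqdef]; linarith
  obtain ⟨ρ, C, hρ1, hC0, hbound, hsum⟩ := key hq0 hq1
  set Bp : PowerSeries ℝ := PowerSeries.mk fun m => q ^ ((m + 1).choose 2) with hBpdef
  have hBps : Bps p = Bp := rfl
  rw [hBps] at hf
  set c : ℕ → ℝ := fun n => PowerSeries.coeff n Bp⁻¹ with hc
  have hB0 : PowerSeries.constantCoeff Bp = 1 := by
    simp [hBpdef, ← PowerSeries.coeff_zero_eq_constantCoeff]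
  have hBinv : Bp * Bp⁻¹ = 1 := PowerSeries.mul_inv_cancel _ (by rw [hB0]; norm_num)
  set g : PowerSeries ℝ := PowerSeries.mk fun _ => (1 : ℝ) with hg
  have hgeom : (1 - PowerSeries.X) * g = 1 := by
    ext n
    rw [sub_mul, one_mul, map_sub]
    cases n with
    | zero => simp [hg]
    | succ m => rw [PowerSeries.coeff_succ_X_mul]; simp [hg, PowerSeries.coeff_one]
  have hW0 : PowerSeries.constantCoeff ((1 - PowerSeries.X) ^ 2 * Bp) = 1 := by
    rw [map_mul, map_pow, map_sub]
    simp [hB0]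
  have hVeq : ((1 - PowerSeries.X) ^ 2 * Bp)⁻¹ = g * g * Bp⁻¹ := by
    have h2 : ((1 - PowerSeries.X) ^ 2 * Bp) * (g * g * Bp⁻¹) = 1 := by
      have h3 : ((1 - PowerSeries.X) ^ 2 * Bp) * (g * g * Bp⁻¹)
          = ((1 - PowerSeries.X) * g) * ((1 - PowerSeries.X) * g) * (Bp * Bp⁻¹) := by ring
      rw [h3, hgeom, hBinv]
      ring
    calc ((1 - PowerSeries.X) ^ 2 * Bp)⁻¹
        = ((1 - PowerSeries.X) ^ 2 * Bp)⁻¹ * (((1 - PowerSeries.X) ^ 2 * Bp) * (g * g * Bp⁻¹)) := by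
          rw [h2, mul_one]
      _ = (((1 - PowerSeries.X) ^ 2 * Bp)⁻¹ * ((1 - PowerSeries.X) ^ 2 * Bp)) * (g * g * Bp⁻¹) := by
          ring
      _ = g * g * Bp⁻¹ := by
          rw [PowerSeries.inv_mul_cancel _ (by rw [hW0]; norm_num), one_mul]
  have hfn : ∀ n : ℕ, f (n + 1) = (∑ k ∈ Finset.range (n + 1), ((n : ℝ) - k + 1) * c k) - 1 := by
    intro n
    have h := congrArg (PowerSeries.coeff (n + 1)) hf
    rw [PowerSeries.coeff_mk, map_add, PowerSeries.coeff_one, PowerSeries.coeff_succ_X_mul,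
      hVeq] at h
    have hgg : ∀ m : ℕ, PowerSeries.coeff m (g * g) = (m : ℝ) + 1 := by
      intro m
      rw [PowerSeries.coeff_mul, Finset.Nat.sum_antidiagonal_eq_sum_range_succ_mk]
      simp [hg]
    have hco : PowerSeries.coeff n (g * g * Bp⁻¹)
        = ∑ k ∈ Finset.range (n + 1), ((n : ℝ) - k + 1) * c k := by
      rw [show g * g * Bp⁻¹ = Bp⁻¹ * (g * g) by ring, PowerSeries.coeff_mul,
        Finset.Nat.sum_antidiagonal_eq_sum_range_succ_mk]
      apply Finset.sum_congr rfl
      intro k hk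
      rw [hgg]
      have hkn : k ≤ n := Nat.lt_succ_iff.1 (Finset.mem_range.1 hk)
      rw [Nat.cast_sub hkn]
      ring
    rw [hco] at h
    have hne : n + 1 ≠ 0 := Nat.succ_ne_zero n
    simp only [hne, if_false] at h
    linarith
  -- the limit
  have hksum : Summable (fun k : ℕ => (k : ℝ) * c k) := by
    have hinv1 : ‖ρ⁻¹‖ < 1 := by
      rw [Real.norm_eq_abs, abs_of_nonneg (by positivity)]
      exact inv_lt_one_of_one_lt₀ hρ1
    have hgeo := summable_pow_mul_geometric_of_norm_lt_one 1 hinv1 (R := ℝ)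
    apply Summable.of_norm_bounded (g := fun k : ℕ => C * ((k : ℝ) ^ 1 * ρ⁻¹ ^ k))
      (hgeo.mul_left C)
    intro k
    rw [Real.norm_eq_abs, abs_mul, Nat.abs_cast, pow_one]
    have := hbound k
    have hk0 : (0 : ℝ) ≤ (k : ℝ) := Nat.cast_nonneg k
    calc (k : ℝ) * |c k| ≤ (k : ℝ) * (C * ρ⁻¹ ^ k) := by
          exact mul_le_mul_of_nonneg_left this hk0
      _ = C * ((k : ℝ) * ρ⁻¹ ^ k) := by ring
  have hP : Tendsto (fun n : ℕ => ∑ k ∈ Finset.range n, c k) atTop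
      (nhds (∑' n : ℕ, q ^ ((n + 1).choose 2))⁻¹) := hsum.tendsto_sum_nat
  have hQ : Tendsto (fun n : ℕ => ∑ k ∈ Finset.range n, (k : ℝ) * c k) atTop
      (nhds (∑' k : ℕ, (k : ℝ) * c k)) := hksum.hasSum.tendsto_sum_nat
  rw [← tendsto_add_atTop_iff_nat 1]
  have heq : ∀ᶠ n : ℕ in atTop, f (n + 1) / (((n + 1 : ℕ) : ℝ) - 1)
      = (∑ k ∈ Finset.range (n + 1), c k) * (((n : ℝ) + 1) / n)
        - ((∑ k ∈ Finset.range (n + 1), (k : ℝ) * c k) + 1) * (1 / n) := by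
    filter_upwards [eventually_ge_atTop 1] with n hn
    have hn0 : (n : ℝ) ≠ 0 := by
      have : (0 : ℝ) < n := by exact_mod_cast hn
      linarith
    rw [hfn n]
    have hsplit : (∑ k ∈ Finset.range (n + 1), ((n : ℝ) - k + 1) * c k)
        = ((n : ℝ) + 1) * (∑ k ∈ Finset.range (n + 1), c k)
          - (∑ k ∈ Finset.range (n + 1), (k : ℝ) * c k) := by
      rw [Finset.mul_sum, ← Finset.sum_sub_distrib]
      apply Finset.sum_congr rfl
      intro k _
      ring
    rw [hsplit]
    push_cast
    rw [show (n:ℝ) + 1 - 1 = n by ring]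
    field_simp
    ring
  rw [tendsto_congr' heq]
  have hrec : Tendsto (fun n : ℕ => 1 / (n : ℝ)) atTop (nhds 0) :=
    tendsto_one_div_atTop_nhds_zero_nat
  have hratio : Tendsto (fun n : ℕ => ((n : ℝ) + 1) / n) atTop (nhds 1) := by
    have heq2 : ∀ᶠ n : ℕ in atTop, ((n : ℝ) + 1) / n = 1 + 1 / n := by
      filter_upwards [eventually_ge_atTop 1] with n hn
      have hn0 : (n : ℝ) ≠ 0 := by
        have : (0 : ℝ) < n := by exact_mod_cast hn
        linarith
      field_simp
    rw [tendsto_congr' heq2]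
    simpa using tendsto_const_nhds.add hrec
  have hP1 : Tendsto (fun n : ℕ => ∑ k ∈ Finset.range (n + 1), c k) atTop
      (nhds (∑' n : ℕ, q ^ ((n + 1).choose 2))⁻¹) := by
    rw [← tendsto_add_atTop_iff_nat 1] at hP
    exact hP
  have hQ1 : Tendsto (fun n : ℕ => ∑ k ∈ Finset.range (n + 1), (k : ℝ) * c k) atTop
      (nhds (∑' k : ℕ, (k : ℝ) * c k)) := by
    rw [← tendsto_add_atTop_iff_nat 1] at hQ
    exact hQ
  have hfin := (hP1.mul hratio).sub
    ((hQ1.add (tendsto_const_nhds (x := (1:ℝ)))).mul hrec)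
  simpa using hfin
end
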